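/- arXiv:1603.05063 — 4 statements merged into one kernel-verified Lean document; each statement's English description precedes it below -/
import Mathlib

section
/- Let i_1,…,i_s ≥ 1 be integers lying in pairwise distinct q-cyclotomic cosets mod N = q^n − 1, and for each j let δ_j denote the size of the q-cyclotomic coset of i_j mod N (so δ_j divides n and F_{q^{δ_j}} is an intermediate field of F_{q^n}/F_q). For λ_1,…,λ_s ∈ F_{q^n}, the identity Tr_{F_{q^n}/F_q}(λ_1 x^{i_1} + ⋯ + λ_s x^{i_s}) = 0 holds for all x ∈ F_{q^n} if and only if Tr_{F_{q^n}/F_{q^{δ_j}}}(λ_j) = 0 for every j = 1,…,s. In particular, if δ_j = n for every j, then the identity holds for all x ∈ F_{q^n} if and only if λ_j = 0 for every j. -/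
open scoped BigOperators

namespace QCSub

/-- The cyclic shift `T(u_1,…,u_N) = (u_N, u_1, …, u_{N-1})` on words of length `N`. -/
def shift {F : Type*} {N : ℕ} (u : Fin N → F) : Fin N → F :=
  fun k => u ⟨((k : ℕ) + (N - 1)) % N, Nat.mod_lt _ k.pos⟩

/-- A code `C ⊆ F^N` is quasi-cyclic of index `ℓ` if `T^ℓ(C) = C` and `ℓ` is the
smallest positive integer with this property. -/
def IsQCOfIndex {F : Type*} {N : ℕ} (C : Set (Fin N → F)) (ℓ : ℕ) : Prop :=
  0 < ℓ ∧ shift^[ℓ] '' C = C ∧ ∀ m : ℕ, 0 < m → shift^[m] '' C = C → ℓ ≤ m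

/-- The `q`-cyclotomic coset of `i` mod `N`, i.e. `{i·q^k mod N : k ≥ 0}`. -/
def cycCoset (q N i : ℕ) : Set (ZMod N) :=
  {x | ∃ k : ℕ, x = (i : ZMod N) * (q : ZMod N) ^ k}

/-- The word `(Tr_{E/F}(β_1 α^{k i_1} + ⋯ + β_s α^{k i_s}))_{0 ≤ k ≤ N−1}`. -/
noncomputable def traceWord (F : Type*) {E : Type*} [Field F] [Field E] [Algebra F E]
    (N : ℕ) {s : ℕ} (α : E) (i : Fin s → ℕ) (β : Fin s → E) : Fin N → F :=
  fun k => Algebra.trace F E (∑ j, β j * α ^ ((k : ℕ) * i j))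

/-- The (sub)code `C_V` determined by coefficient sets `V_1,…,V_s ⊆ E`. -/
noncomputable def codeOf (F : Type*) {E : Type*} [Field F] [Field E] [Algebra F E]
    (N : ℕ) {s : ℕ} (α : E) (i : Fin s → ℕ) (V : Fin s → Set E) : Set (Fin N → F) :=
  {w | ∃ β : Fin s → E, (∀ j, β j ∈ V j) ∧ w = traceWord F N α i β}

/-- An `F`-subspace `V ⊆ E` "is a vector space over" the intermediate field `K`
if it is closed under multiplication by the elements of `K`. -/
def SpanOver {F E : Type*} [Field F] [Field E] [Algebra F E]
    (V : Submodule F E) (K : IntermediateField F E) : Prop :=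
  ∀ c ∈ K, ∀ v ∈ V, c * v ∈ V

/-- The Gaussian binomial coefficient `(m choose k)_Q`. -/
def gaussBinom (Q m k : ℕ) : ℕ :=
  (∏ t ∈ Finset.range k, (Q ^ m - Q ^ t)) / (∏ t ∈ Finset.range k, (Q ^ k - Q ^ t))

/-- `N(m, Q)`: the number of nonzero `F_Q`-subspaces of an `m`-dimensional
`F_Q`-vector space, i.e. the sum of Gaussian binomial coefficients
`Σ_{k=1}^{m} (m choose k)_Q`. -/
def numSubspaces (m Q : ℕ) : ℕ := ∑ k ∈ Finset.Icc 1 m, gaussBinom Q m k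

end QCSub

open QCSub

open Polynomial Finset

section Aux

variable {M : Type*} [CommMonoid M]

lemma QCSub.mul_pow_mul_period {u a : M} {d : ℕ} (hd : a * u ^ d = a) :
    ∀ t, a * u ^ (d * t) = a := by
  intro t
  induction t with
  | zero => simp
  | succ t ih => rw [Nat.mul_succ, pow_add, ← mul_assoc, ih, hd]

lemma QCSub.orbit_mod_period {u a : M} {d : ℕ} (hd : a * u ^ d = a) (k : ℕ) :
    a * u ^ k = a * u ^ (k % d) := by
  conv_lhs => rw [← Nat.div_add_mod k d]
  rw [pow_add, ← mul_assoc, QCSub.mul_pow_mul_period hd]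

lemma QCSub.orbit_key {u a : M} {n : ℕ} (hn : 0 < n) (hu : u ^ n = 1) :
    ∃ d, 0 < d ∧ d ≤ n ∧ a * u ^ d = a ∧
      (∀ r < d, ∀ r' < d, a * u ^ r = a * u ^ r' → r = r') ∧
      {x | ∃ k, x = a * u ^ k}.ncard = d := by
  classical
  have hPn : 0 < n ∧ a * u ^ n = a := ⟨hn, by rw [hu, mul_one]⟩
  have hex : ∃ k, 0 < k ∧ a * u ^ k = a := ⟨n, hPn⟩
  set d := Nat.find hex with hdef
  obtain ⟨hd0, hda⟩ := Nat.find_spec hex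
  have hdn : d ≤ n := Nat.find_min' hex hPn
  have key : ∀ r r', r < r' → r' < d → a * u ^ r = a * u ^ r' → False := by
    intro r r' hrr hr'd heq
    have h1 : a * u ^ (r' - r) = a := by
      have h2 := congrArg (· * u ^ (n - r)) heq
      simp only [mul_assoc, ← pow_add] at h2
      rw [Nat.add_sub_cancel' (le_of_lt (lt_of_lt_of_le (hrr.trans hr'd) hdn)),
        show r' + (n - r) = (r' - r) + n by omega, pow_add, hu, mul_one, ← mul_assoc] at h2
      simpa using h2.symm
    exact Nat.find_min hex (show r' - r < d by omega) ⟨by omega, h1⟩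
  have hinj : ∀ r < d, ∀ r' < d, a * u ^ r = a * u ^ r' → r = r' := by
    intro r hr r' hr' heq
    rcases lt_trichotomy r r' with h | h | h
    · exact absurd heq (fun hh => key r r' h hr' hh)
    · exact h
    · exact absurd heq.symm (fun hh => key r' r h hr hh)
  have hset : {x | ∃ k, x = a * u ^ k} =
      ↑((Finset.range d).image (fun r => a * u ^ r)) := by
    ext x
    simp only [Set.mem_setOf_eq, Finset.coe_image, Set.mem_image, Finset.mem_coe,
      Finset.mem_range]
    constructor
    · rintro ⟨k, rfl⟩; exact ⟨k % d, Nat.mod_lt _ hd0, (QCSub.orbit_mod_period hda k).symm⟩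
    · rintro ⟨r, _, rfl⟩; exact ⟨r, rfl⟩
  refine ⟨d, hd0, hdn, hda, hinj, ?_⟩
  rw [hset, Set.ncard_coe_finset, Finset.card_image_of_injOn, Finset.card_range]
  intro r hr r' hr' h
  exact hinj r (Finset.mem_range.mp hr) r' (Finset.mem_range.mp hr') h

lemma QCSub.orbit_shift {u a : M} {n : ℕ} (hn : 0 < n) (hu : u ^ n = 1) (k : ℕ) :
    {x | ∃ m, x = (a * u ^ k) * u ^ m} = {x | ∃ m, x = a * u ^ m} := by
  ext x
  simp only [Set.mem_setOf_eq]
  constructor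
  · rintro ⟨m, rfl⟩; exact ⟨k + m, by rw [pow_add, mul_assoc]⟩
  · rintro ⟨m, rfl⟩
    refine ⟨m + k * (n - 1), ?_⟩
    rw [mul_assoc, ← pow_add,
      show k + (m + k * (n - 1)) = m + n * k by
        cases n with
        | zero => omega
        | succ c => simp only [Nat.succ_sub_one]; ring,
      pow_add, pow_mul, hu, one_pow, mul_one]

lemma QCSub.pow_mod_eq {E : Type*} [Monoid E] {x : E} {N : ℕ} (hx : x ^ N = 1) (a : ℕ) :
    x ^ a = x ^ (a % N) := by
  conv_lhs => rw [← Nat.div_add_mod a N]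
  rw [pow_add, pow_mul, hx, one_pow, one_mul]

lemma QCSub.sum_range_mul' {β : Type*} [AddCommMonoid β] (g : ℕ → β) (a b : ℕ) :
    ∑ k ∈ Finset.range (a * b), g k
      = ∑ t ∈ Finset.range b, ∑ r ∈ Finset.range a, g (a * t + r) := by
  induction b with
  | zero => simp
  | succ b ih =>
    rw [Nat.mul_succ, Finset.sum_range_add, ih, Finset.sum_range_succ]

lemma QCSub.pow_id_contra {E : Type*} [Field E] [Fintype E] {Q : ℕ} (h1 : 1 < Q)
    (h2 : Q < Fintype.card E) (h : ∀ y : E, y ^ Q = y) : False := by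
  classical
  have hP : (X ^ Q - X : E[X]) = 0 := by
    apply Polynomial.eq_zero_of_natDegree_lt_card_of_eval_eq_zero _
      (Function.injective_id (α := E))
    · intro y; simp [h y]
    · refine lt_of_le_of_lt ((natDegree_sub_le _ _).trans ?_) h2
      rw [Polynomial.natDegree_X_pow, Polynomial.natDegree_X]
      omega
  have h3 := congrArg (fun P : E[X] => P.coeff Q) hP
  simp only [coeff_sub, coeff_X_pow, if_pos rfl, coeff_zero, Polynomial.coeff_X,
    if_neg (show ¬(1 = Q) by omega)] at h3
  rw [sub_zero] at h3
  exact one_ne_zero h3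

lemma QCSub.poly_vanish {E : Type*} [Field E] [Fintype E] (P : E[X])
    (hd : P.natDegree < Fintype.card E - 1)
    (h : ∀ x : E, x ≠ 0 → P.eval x = 0) : P = 0 := by
  classical
  apply Polynomial.eq_zero_of_natDegree_lt_card_of_eval_eq_zero' P (Finset.univ.erase 0)
    (fun x hx => h x (Finset.ne_of_mem_erase hx))
  rwa [Finset.card_erase_of_mem (Finset.mem_univ 0), Finset.card_univ]

lemma QCSub.trace_formula (F E : Type*) [Field F] [Field E] [Algebra F E] [Finite E] (x : E) :
    algebraMap F E (Algebra.trace F E x) =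
      ∑ k ∈ Finset.range (Module.finrank F E), x ^ (Nat.card F) ^ k := by
  classical
  haveI : Finite F := Finite.of_injective _ (algebraMap F E).injective
  letI : Fintype E := Fintype.ofFinite E
  letI : Fintype F := Fintype.ofFinite F
  set p := ringChar F with hpdef
  haveI : CharP F p := ringChar.charP F
  haveI : CharP E p := charP_of_injective_algebraMap' F p
  have hp : p.Prime := CharP.char_is_prime F p
  haveI : Fact p.Prime := ⟨hp⟩
  haveI : ExpChar F p := ExpChar.prime hp
  haveI : ExpChar E p := ExpChar.prime hp
  obtain ⟨e', -, hcard⟩ := FiniteField.card F p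
  set Q := Fintype.card F with hQdef
  set m := Module.finrank F E with hmdef
  have hQ1 : 1 < Q := Fintype.one_lt_card
  have hcardE : Fintype.card E = Q ^ m := Module.card_eq_pow_finrank
  have hcomm : ∀ c : F, (iterateFrobenius E p e') (algebraMap F E c) = algebraMap F E c := by
    intro c
    rw [iterateFrobenius_def, ← map_pow, ← hcard, FiniteField.pow_card]
  let φA : E →ₐ[F] E := { (iterateFrobenius E p e') with commutes' := hcomm }
  have hφAinj : Function.Injective φA := (iterateFrobenius E p e').injective
  let φ : E ≃ₐ[F] E := AlgEquiv.ofBijective φA ((Finite.injective_iff_bijective).mp hφAinj)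
  have hφ : ∀ y : E, φ y = y ^ Q := by
    intro y
    show (iterateFrobenius E p e') y = y ^ Q
    rw [iterateFrobenius_def, hcard]
  have hφpow : ∀ (k : ℕ) (y : E), (φ ^ k) y = y ^ Q ^ k := by
    intro k
    induction k with
    | zero => intro y; simp
    | succ k ih =>
      intro y
      rw [pow_succ', AlgEquiv.mul_apply, ih y, hφ, ← pow_mul, ← pow_succ]
  have hinj : Function.Injective (fun k : Fin m => φ ^ (k : ℕ)) := by
    intro a b hab
    by_contra hne
    have key : ∀ a b : Fin m, (a : ℕ) < (b : ℕ) → φ ^ (a : ℕ) = φ ^ (b : ℕ) → False := by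
      intro a b hlt heq
      have hfix : ∀ z : E, z ^ Q ^ ((b : ℕ) - (a : ℕ)) = z := by
        intro z
        obtain ⟨y, rfl⟩ := (φ ^ (a : ℕ)).surjective z
        have h1 : (φ ^ (a : ℕ)) y = (φ ^ (b : ℕ)) y := by rw [heq]
        rw [hφpow, hφpow] at h1
        rw [hφpow, ← pow_mul, ← pow_add, show (a:ℕ) + ((b:ℕ) - (a:ℕ)) = (b:ℕ) by omega,
          ← h1]
      exact QCSub.pow_id_contra (Nat.one_lt_pow (by omega) hQ1)
        (by rw [hcardE]; exact Nat.pow_lt_pow_right hQ1 (by omega)) hfix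
    rcases lt_trichotomy (a : ℕ) (b : ℕ) with h | h | h
    · exact key a b h hab
    · exact hne (Fin.ext h)
    · exact key b a h hab.symm
  have hbij : Function.Bijective (fun k : Fin m => φ ^ (k : ℕ)) := by
    rw [Fintype.bijective_iff_injective_and_card]
    exact ⟨hinj, by rw [Fintype.card_fin, ← Nat.card_eq_fintype_card, IsGalois.card_aut_eq_finrank]⟩
  rw [trace_eq_sum_automorphisms]
  rw [← Fintype.sum_bijective _ hbij (fun k : Fin m => x ^ Q ^ (k : ℕ))
    (fun σ => σ x) (fun k => (hφpow k x).symm)]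
  rw [Fin.sum_univ_eq_sum_range (fun k => x ^ Q ^ k) m, Nat.card_eq_fintype_card]

end Aux
/-- Theorem 2.5 of Güneri, cited as Theorem `cg`.
For `i_1,…,i_s ≥ 1` in pairwise distinct `q`-cyclotomic cosets mod `N = q^n − 1`,
with `δ_j` the size of the coset of `i_j`, the identity
`Tr_{F_{q^n}/F_q}(λ_1 x^{i_1} + ⋯ + λ_s x^{i_s}) = 0` for all `x` holds iff
`Tr_{F_{q^n}/F_{q^{δ_j}}}(λ_j) = 0` for all `j`; in particular if every `δ_j = n`,
it holds iff every `λ_j = 0`. -/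
theorem trace_identity_vanishes_iff
    (p e q n N : ℕ) [Fact p.Prime] (he : 0 < e) (hq : q = p ^ e) (hn : 0 < n)
    (hN : N = q ^ n - 1)
    (F E : Type*) [Field F] [Field E] [Algebra F E]
    (hF : Nat.card F = q) (hE : Nat.card E = q ^ n)
    (s : ℕ) (i : Fin s → ℕ) (hi : ∀ j, 1 ≤ i j)
    (hdist : ∀ j j' : Fin s, j ≠ j' → cycCoset q N (i j) ≠ cycCoset q N (i j'))
    (δ : Fin s → ℕ) (hδ : ∀ j, (cycCoset q N (i j)).ncard = δ j)
    (hδn : ∀ j, δ j ∣ n)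
    (K : Fin s → IntermediateField F E) (hK : ∀ j, Nat.card (K j) = q ^ δ j)
    (lam : Fin s → E) :
    ((∀ x : E, Algebra.trace F E (∑ j, lam j * x ^ i j) = 0) ↔
      ∀ j, Algebra.trace (K j) E (lam j) = 0) ∧
    ((∀ j, δ j = n) →
      ((∀ x : E, Algebra.trace F E (∑ j, lam j * x ^ i j) = 0) ↔ ∀ j, lam j = 0)) := by
  classical
  have hp : p.Prime := Fact.out
  have hp2 : 2 ≤ p := hp.two_le
  have hq2 : 2 ≤ q := by
    rw [hq]
    calc 2 ≤ p := hp2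
      _ ≤ p ^ e := Nat.le_self_pow (by omega) p
  have hqn1 : 1 < q ^ n := Nat.one_lt_pow (by omega) (by omega)
  have hN0 : 0 < N := by omega
  have hNq : N + 1 = q ^ n := by omega
  haveI : NeZero N := ⟨by omega⟩
  haveI : Finite E := (Nat.card_pos_iff.mp (by rw [hE]; omega)).2
  haveI : Finite F := (Nat.card_pos_iff.mp (by rw [hF]; omega)).2
  letI : Fintype E := Fintype.ofFinite E
  have hcardE : Fintype.card E = q ^ n := by rw [← Nat.card_eq_fintype_card, hE]
  -- the unit u = q in ZMod N
  have hun : (q : ZMod N) ^ n = 1 := by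
    have h1 : ((q ^ n : ℕ) : ZMod N) = ((N + 1 : ℕ) : ZMod N) := by rw [hNq]
    push_cast [ZMod.natCast_self] at h1
    simpa using h1
  -- orbit data
  have horb : ∀ j, 0 < δ j ∧ ((i j : ZMod N) * (q : ZMod N) ^ (δ j) = (i j : ZMod N)) ∧
      (∀ r < δ j, ∀ r' < δ j,
        (i j : ZMod N) * (q : ZMod N) ^ r = (i j : ZMod N) * (q : ZMod N) ^ r' → r = r') := by
    intro j
    obtain ⟨d, hd0, hdn, hper, hinj, hcard⟩ :=
      QCSub.orbit_key (u := (q : ZMod N)) (a := (i j : ZMod N)) hn hun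
    have hdd : d = δ j := by
      rw [← hδ j]
      exact hcard.symm
    rw [hdd] at hd0 hper hinj
    exact ⟨hd0, hper, hinj⟩
  -- characteristic of E
  obtain ⟨p', hp'⟩ := CharP.exists E
  haveI : CharP E p' := hp'
  obtain ⟨m', hp'prime, hcard'⟩ := FiniteField.card E p'
  have hp'p : p' = p := by
    have h1 : p' ∣ q ^ n := by
      rw [← hcardE, hcard']
      exact dvd_pow_self p' m'.ne_zero
    rw [hq, ← pow_mul] at h1
    exact (Nat.prime_dvd_prime_iff_eq hp'prime hp).mp (hp'prime.dvd_of_dvd_pow h1)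
  haveI : CharP E p := by rwa [hp'p] at hp'
  haveI : ExpChar E p := ExpChar.prime hp
  -- Frobenius ring homs
  have hΦ : ∀ (k : ℕ) (y : E), iterateFrobenius E p (e * k) y = y ^ q ^ k := by
    intro k y
    rw [iterateFrobenius_def, pow_mul, ← hq]
  -- finrank data
  have hnδf : ∀ j, n = δ j * Module.finrank ↥(K j) E := by
    intro j
    letI : Fintype ↥(K j) := Fintype.ofFinite ↥(K j)
    have h1 : Fintype.card E = Fintype.card ↥(K j) ^ Module.finrank ↥(K j) E :=
      Module.card_eq_pow_finrank
    rw [hcardE, ← Nat.card_eq_fintype_card (α := ↥(K j)), hK j, ← pow_mul] at h1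
    exact Nat.pow_right_injective hq2 h1
  -- the relative traces, embedded in E
  set μ : Fin s → E :=
    fun j => ∑ t ∈ Finset.range (Module.finrank ↥(K j) E), lam j ^ ((q ^ δ j) ^ t) with hμdef
  have hμiff : ∀ j, (Algebra.trace (K j) E (lam j) = 0 ↔ μ j = 0) := by
    intro j
    have h1 := QCSub.trace_formula (↥(K j)) E (lam j)
    rw [hK j] at h1
    have h2 : μ j = algebraMap ↥(K j) E (Algebra.trace (↥(K j)) E (lam j)) := by
      rw [hμdef]
      exact h1.symm
    rw [h2]
    exact ⟨fun h => by rw [h, map_zero],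
      fun h => (algebraMap ↥(K j) E).injective (by rw [h, map_zero])⟩
  -- key identity
  have key : ∀ x : E, x ≠ 0 →
      algebraMap F E (Algebra.trace F E (∑ j, lam j * x ^ i j)) =
        ∑ j, ∑ r ∈ Finset.range (δ j), (μ j) ^ q ^ r * x ^ ((i j * q ^ r) % N) := by
    intro x hx
    have hxN : x ^ N = 1 := by
      have h1 := FiniteField.pow_card_sub_one_eq_one x hx
      rwa [hcardE, ← hN] at h1
    have hfr : Module.finrank F E = n := by
      letI : Fintype F := Fintype.ofFinite F
      have h1 : Fintype.card E = Fintype.card F ^ Module.finrank F E := Module.card_eq_pow_finrank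
      rw [hcardE, ← Nat.card_eq_fintype_card (α := F), hF] at h1
      exact (Nat.pow_right_injective hq2 h1).symm
    rw [QCSub.trace_formula, hfr, hF]
    have step1 : ∀ k : ℕ, (∑ j, lam j * x ^ i j) ^ q ^ k
        = ∑ j, lam j ^ q ^ k * x ^ ((i j * q ^ k) % N) := by
      intro k
      have h2 : (∑ j, lam j * x ^ i j) ^ q ^ k = ∑ j, (lam j * x ^ i j) ^ q ^ k := by
        rw [← hΦ k, map_sum]
        simp only [hΦ]
      rw [h2]
      refine Finset.sum_congr rfl (fun j _ => ?_)
      rw [mul_pow, ← pow_mul, QCSub.pow_mod_eq hxN]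
    have inner : ∀ j : Fin s,
        (∑ k ∈ Finset.range n, lam j ^ q ^ k * x ^ ((i j * q ^ k) % N))
          = ∑ r ∈ Finset.range (δ j), μ j ^ q ^ r * x ^ ((i j * q ^ r) % N) := by
      intro j
      obtain ⟨hδ0, hper, hinjj⟩ := horb j
      have hmod : ∀ t r : ℕ, (i j * q ^ (δ j * t + r)) % N = (i j * q ^ r) % N := by
        intro t r
        have hz : ((i j * q ^ (δ j * t + r) : ℕ) : ZMod N) = ((i j * q ^ r : ℕ) : ZMod N) := by
          push_cast
          rw [pow_add, ← mul_assoc, QCSub.mul_pow_mul_period hper t]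
        exact (ZMod.natCast_eq_natCast_iff' _ _ _).mp hz
      rw [hnδf j, QCSub.sum_range_mul', Finset.sum_comm]
      refine Finset.sum_congr rfl (fun r _ => ?_)
      have hterm : ∀ t, lam j ^ q ^ (δ j * t + r) * x ^ ((i j * q ^ (δ j * t + r)) % N)
          = (lam j ^ (q ^ δ j) ^ t) ^ q ^ r * x ^ ((i j * q ^ r) % N) := by
        intro t
        rw [hmod, pow_add, pow_mul, pow_mul]
      rw [Finset.sum_congr rfl (fun t _ => hterm t), ← Finset.sum_mul]
      congr 1
      calc ∑ t ∈ Finset.range (Module.finrank ↥(K j) E), (lam j ^ (q ^ δ j) ^ t) ^ q ^ r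
          = ∑ t ∈ Finset.range (Module.finrank ↥(K j) E),
              iterateFrobenius E p (e * r) (lam j ^ (q ^ δ j) ^ t) := by
            simp only [hΦ]
        _ = iterateFrobenius E p (e * r)
              (∑ t ∈ Finset.range (Module.finrank ↥(K j) E), lam j ^ (q ^ δ j) ^ t) :=
            (map_sum _ _ _).symm
        _ = μ j ^ q ^ r := by rw [hΦ, hμdef]
    calc ∑ k ∈ Finset.range n, (∑ j, lam j * x ^ i j) ^ q ^ k
        = ∑ k ∈ Finset.range n, ∑ j, lam j ^ q ^ k * x ^ ((i j * q ^ k) % N) :=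
          Finset.sum_congr rfl (fun k _ => step1 k)
      _ = ∑ j, ∑ k ∈ Finset.range n, lam j ^ q ^ k * x ^ ((i j * q ^ k) % N) :=
          Finset.sum_comm
      _ = ∑ j, ∑ r ∈ Finset.range (δ j), μ j ^ q ^ r * x ^ ((i j * q ^ r) % N) :=
          Finset.sum_congr rfl (fun j _ => inner j)
  -- backward direction
  have hback : (∀ j, μ j = 0) → ∀ x : E, Algebra.trace F E (∑ j, lam j * x ^ i j) = 0 := by
    intro hμ0 x
    by_cases hx : x = 0
    · subst hx
      have h1 : ∀ j : Fin s, j ∈ Finset.univ → lam j * (0 : E) ^ i j = 0 := fun j _ => by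
        rw [zero_pow (by have := hi j; omega), mul_zero]
      rw [Finset.sum_congr rfl h1, Finset.sum_const_zero, map_zero]
    · apply (algebraMap F E).injective
      rw [map_zero, key x hx]
      refine Finset.sum_eq_zero (fun j _ => Finset.sum_eq_zero (fun r _ => ?_))
      rw [hμ0 j, zero_pow (pow_pos (show 0 < q by omega) r).ne', zero_mul]
  -- forward direction
  have hfwd : (∀ x : E, Algebra.trace F E (∑ j, lam j * x ^ i j) = 0) → ∀ j, μ j = 0 := by
    intro H j0
    set P : E[X] := ∑ j, ∑ r ∈ Finset.range (δ j),
      Polynomial.C ((μ j) ^ q ^ r) * Polynomial.X ^ ((i j * q ^ r) % N) with hP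
    have hPeval : ∀ x : E, x ≠ 0 → P.eval x = 0 := by
      intro x hx
      have h1 := key x hx
      rw [H x, map_zero] at h1
      rw [hP]
      simp only [Polynomial.eval_finset_sum, Polynomial.eval_mul, Polynomial.eval_C,
        Polynomial.eval_pow, Polynomial.eval_X]
      exact h1.symm
    have hPdeg : P.natDegree ≤ N - 1 := by
      rw [hP]
      refine Polynomial.natDegree_sum_le_of_forall_le _ _ (fun j _ => ?_)
      refine Polynomial.natDegree_sum_le_of_forall_le _ _ (fun r _ => ?_)
      refine (Polynomial.natDegree_C_mul_X_pow_le _ _).trans ?_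
      have := Nat.mod_lt (i j * q ^ r) hN0
      omega
    have hP0 : P = 0 := by
      apply QCSub.poly_vanish P _ hPeval
      rw [hcardE]
      omega
    have hED : ∀ (j : Fin s) (r : ℕ), r < δ j →
        (i j * q ^ r) % N = (i j0 * q ^ 0) % N → j = j0 ∧ r = 0 := by
      intro j r hr heq
      have hz : (i j : ZMod N) * (q : ZMod N) ^ r = (i j0 : ZMod N) * (q : ZMod N) ^ 0 := by
        have h1 := congrArg (Nat.cast : ℕ → ZMod N) heq
        rwa [ZMod.natCast_mod, ZMod.natCast_mod, Nat.cast_mul, Nat.cast_mul,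
          Nat.cast_pow, Nat.cast_pow] at h1
      have hjj : j = j0 := by
        by_contra hne
        apply hdist j j0 hne
        have e1 : cycCoset q N (i j) =
            {x | ∃ m, x = ((i j : ZMod N) * (q : ZMod N) ^ r) * (q : ZMod N) ^ m} :=
          (QCSub.orbit_shift hn hun r).symm
        have e2 : cycCoset q N (i j0) =
            {x | ∃ m, x = ((i j0 : ZMod N) * (q : ZMod N) ^ 0) * (q : ZMod N) ^ m} :=
          (QCSub.orbit_shift hn hun 0).symm
        rw [e1, e2, hz]
      subst hjj
      exact ⟨rfl, (horb j).2.2 r hr 0 (horb j).1 (by simpa using hz)⟩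
    have hcoeff : P.coeff ((i j0 * q ^ 0) % N) = μ j0 := by
      rw [hP]
      simp only [Polynomial.finset_sum_coeff, Polynomial.coeff_C_mul, Polynomial.coeff_X_pow]
      rw [Finset.sum_eq_single j0
          (fun b _ hb => Finset.sum_eq_zero (fun r hr => by
            rw [if_neg (fun hcon => hb (hED b r (Finset.mem_range.mp hr) hcon.symm).1),
              mul_zero]))
          (fun h => absurd (Finset.mem_univ j0) h)]
      rw [Finset.sum_eq_single 0
          (fun r hr hr0 => by
            rw [if_neg (fun hcon => hr0 (hED j0 r (Finset.mem_range.mp hr) hcon.symm).2),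
              mul_zero])
          (fun h => absurd (Finset.mem_range.mpr (horb j0).1) h)]
      rw [if_pos rfl, pow_zero, pow_one, mul_one]
    have h0 : (0 : E[X]).coeff ((i j0 * q ^ 0) % N) = μ j0 := hP0 ▸ hcoeff
    simpa using h0.symm
  have hpart1 : (∀ x : E, Algebra.trace F E (∑ j, lam j * x ^ i j) = 0) ↔ ∀ j, μ j = 0 :=
    ⟨hfwd, hback⟩
  refine ⟨hpart1.trans (forall_congr' (fun j => (hμiff j).symm)), ?_⟩
  intro hall
  have hμlam : ∀ j, μ j = lam j := by
    intro j
    have hf1 : Module.finrank ↥(K j) E = 1 := by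
      have h1 := hnδf j
      rw [hall j] at h1
      exact (Nat.eq_of_mul_eq_mul_left hn (by rw [← h1, mul_one])).symm
    rw [hμdef]
    simp only [hf1, Finset.sum_range_one, pow_zero, pow_one]
  rw [hpart1]
  exact forall_congr' (fun j => by rw [hμlam j])
end

section
/- C_V is an F_q-linear subcode of C if and only if V_j is an F_q-linear subspace of F_{q^n} for every j = 1,…,s. -/
open scoped BigOperators

open QCSub

lemma pow_mod_of_pow_eq_one {G : Type*} [Monoid G] {x : G} {M : ℕ} (hx : x ^ M = 1) (a : ℕ) :
    x ^ a = x ^ (a % M) := by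
  conv_lhs => rw [← Nat.div_add_mod a M]
  rw [pow_add, pow_mul, hx, one_pow, one_mul]

noncomputable def traceWordL (F : Type*) {E : Type*} [Field F] [Field E] [Algebra F E]
    (N : ℕ) {s : ℕ} (α : E) (i : Fin s → ℕ) : (Fin s → E) →ₗ[F] (Fin N → F) where
  toFun β := traceWord F N α i β
  map_add' β γ := by
    funext k
    simp [traceWord, add_mul, Finset.sum_add_distrib, map_add, Pi.add_apply]
  map_smul' c β := by
    funext k
    simp [traceWord, smul_mul_assoc, ← Finset.smul_sum, map_smul, Pi.smul_apply]

theorem traceWord_inj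
    (p e q n N : ℕ) [Fact p.Prime] (he : 0 < e) (hq : q = p ^ e) (hn : 0 < n)
    (hN : N = q ^ n - 1)
    (F E : Type*) [Field F] [Field E] [Algebra F E]
    (hF : Nat.card F = q) (hE : Nat.card E = q ^ n)
    (α : E) (hα : orderOf α = q ^ n - 1)
    (s : ℕ) (i : Fin s → ℕ) (hi : ∀ j, 1 ≤ i j)
    (hdist : ∀ j j' : Fin s, j ≠ j' → cycCoset q N (i j) ≠ cycCoset q N (i j'))
    (hfull : ∀ j, (cycCoset q N (i j)).ncard = n)
    (β : Fin s → E) (hβ : traceWord F N α i β = 0) : β = 0 := by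
  have hp : p.Prime := Fact.out
  have hq2 : 2 ≤ q := by
    subst hq
    calc 2 ≤ p := hp.two_le
    _ ≤ p ^ e := Nat.le_self_pow he.ne' p
  have hqn2 : 2 ≤ q ^ n := le_trans hq2 (Nat.le_self_pow hn.ne' q)
  have hN1 : 1 ≤ N := by omega
  have hNsucc : N + 1 = q ^ n := by omega
  -- finiteness
  have hFfin : Finite F := Nat.finite_of_card_ne_zero (by omega)
  have hEfin : Finite E := Nat.finite_of_card_ne_zero (by omega)
  letI : Fintype F := Fintype.ofFinite F
  letI : Fintype E := Fintype.ofFinite E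
  letI : DecidableEq E := Classical.decEq E
  have hFcard : Fintype.card F = q := by rw [← Nat.card_eq_fintype_card, hF]
  have hEcard : Fintype.card E = q ^ n := by rw [← Nat.card_eq_fintype_card, hE]
  -- characteristic of E is p
  have hpE : CharP E p := by
    obtain ⟨p', hp'⟩ := CharP.exists E
    haveI := hp'
    obtain ⟨m, hp'p, hcard⟩ := FiniteField.card E p'
    have hpdvd : p ∣ p' ^ (m : ℕ) := by
      rw [← hcard, hEcard] at *
      refine ?_
      have : p ∣ q ^ n := by
        rw [hq, ← pow_mul]
        exact dvd_pow_self p (by positivity)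
      rwa [hcard] at this
    have : p = p' := by
      rcases (Nat.Prime.dvd_of_dvd_pow hp hpdvd) with h
      exact ((Nat.prime_dvd_prime_iff_eq hp hp'p).mp h)
    rwa [this]
  -- the primitive unit
  have hordα : orderOf α = N := by rw [hα, hN]
  have hαpow : α ^ N = 1 := by rw [← hordα]; exact pow_orderOf_eq_one α
  have hα0 : α ≠ 0 := by
    rintro rfl
    rw [zero_pow (by omega)] at hαpow
    exact one_ne_zero hαpow.symm
  set u : Eˣ := Units.mk0 α hα0 with hu
  have huE : (u : E) = α := rfl
  have hordu : orderOf u = N := by rw [← orderOf_units, huE, hordα]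
  have hcardu : Fintype.card Eˣ = N := by rw [Fintype.card_units, hEcard, hN]
  have hsurj : ∀ x : Eˣ, ∃ k : Fin N, u ^ (k : ℕ) = x := by
    have hinj : Function.Injective (fun k : Fin N => u ^ (k : ℕ)) := by
      intro a b hab
      simp only at hab
      rw [pow_eq_pow_iff_modEq, hordu, Nat.ModEq, Nat.mod_eq_of_lt a.2,
        Nat.mod_eq_of_lt b.2] at hab
      exact Fin.ext hab
    have hbij : Function.Bijective (fun k : Fin N => u ^ (k : ℕ)) :=
      (Fintype.bijective_iff_injective_and_card _).mpr ⟨hinj, by simp [hcardu]⟩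
    exact fun x => hbij.2 x
  -- basic ZMod N facts
  have hqZ : ((q : ZMod N)) ^ n = 1 := by
    have h1 : ((q ^ n : ℕ) : ZMod N) = ((N + 1 : ℕ) : ZMod N) := by rw [hNsucc]
    push_cast at h1
    rwa [ZMod.natCast_self, zero_add] at h1
  -- finrank
  haveI : FiniteDimensional F E := Module.Finite.of_finite
  have hrank : Module.finrank F E = n := by
    have h1 := Module.card_eq_pow_finrank (K := F) (V := E)
    rw [hFcard, hEcard] at h1
    exact (Nat.pow_right_injective hq2 h1.symm)
  -- Frobenius automorphisms
  have hcommutes : ∀ (t : ℕ) (c : F),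
      (iterateFrobenius E p (e * t)) (algebraMap F E c) = algebraMap F E c := by
    intro t c
    rw [iterateFrobenius_def, ← map_pow, pow_mul, ← hq, ← hFcard, FiniteField.pow_card_pow]
  let σfun : ℕ → (E →ₐ[F] E) := fun t =>
    { iterateFrobenius E p (e * t) with commutes' := hcommutes t }
  have hσfun : ∀ (t : ℕ) (y : E), σfun t y = y ^ q ^ t := by
    intro t y
    show iterateFrobenius E p (e * t) y = _
    rw [iterateFrobenius_def, pow_mul, ← hq]
  let σ : Fin n → (E ≃ₐ[F] E) := fun t =>
    AlgEquiv.ofBijective (σfun (t : ℕ))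
      ((Finite.injective_iff_bijective).mp (σfun (t : ℕ)).toRingHom.injective)
  have hσapp : ∀ (t : Fin n) (y : E), σ t y = y ^ q ^ (t : ℕ) := fun t y => hσfun _ y
  -- injectivity of t ↦ σ t
  have hqpow_inj : ∀ a b : ℕ, a < n → b < n → (q : ZMod N) ^ a = (q : ZMod N) ^ b → a = b := by
    have key : ∀ a b : ℕ, a ≤ b → b < n → (q : ZMod N) ^ a = (q : ZMod N) ^ b → a = b := by
      intro a b hab hbn h
      by_contra hne
      have hd : 0 < b - a := by omega
      have hmod : q ^ a ≡ q ^ b [MOD N] := (ZMod.natCast_eq_natCast_iff _ _ _).mp (by push_cast; rw [h])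
      have hco : Nat.Coprime q N := by
        have h1 : Nat.gcd q N ∣ q ^ n := (Nat.gcd_dvd_left q N).trans (dvd_pow_self q hn.ne')
        have h2 : Nat.gcd q N ∣ N := Nat.gcd_dvd_right q N
        have h3 : Nat.gcd q N ∣ 1 := by
          have h4 := Nat.dvd_sub h1 h2
          rwa [show q ^ n - N = 1 by omega] at h4
        exact Nat.dvd_one.mp h3
      have hmod2 : q ^ a * q ^ (b - a) ≡ q ^ a * 1 [MOD N] := by
        rw [← pow_add, mul_one, Nat.add_sub_cancel' hab]
        exact hmod.symm
      have hmod3 : q ^ (b - a) ≡ 1 [MOD N] :=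
        Nat.ModEq.cancel_left_of_coprime ((Nat.Coprime.pow_left a hco).symm) hmod2
      have hdvd : N ∣ q ^ (b - a) - 1 := (Nat.modEq_iff_dvd' (Nat.one_le_pow _ _ (by omega))).mp hmod3.symm
      have hlt : q ^ (b - a) - 1 < N := by
        have : q ^ (b - a) < q ^ n := Nat.pow_lt_pow_right (by omega) (by omega)
        omega
      have hpos : 0 < q ^ (b - a) - 1 := by
        have : 2 ≤ q ^ (b - a) := le_trans hq2 (Nat.le_self_pow (by omega) q)
        omega
      exact absurd (Nat.le_of_dvd hpos hdvd) (by omega)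
    intro a b ha hb h
    rcases le_total a b with hab | hab
    · exact key a b hab hb h
    · exact (key b a hab ha h.symm).symm
  have hσinj : Function.Injective σ := by
    intro a b hab
    have h1 : α ^ q ^ (a : ℕ) = α ^ q ^ (b : ℕ) := by
      have h2 : σ a α = σ b α := by rw [hab]
      rwa [hσapp, hσapp] at h2
    have h1u : u ^ q ^ (a : ℕ) = u ^ q ^ (b : ℕ) := Units.ext (by
      rw [Units.val_pow_eq_pow_val, Units.val_pow_eq_pow_val, huE]; exact h1)
    rw [pow_eq_pow_iff_modEq, hordu] at h1u
    have h3 : (q : ZMod N) ^ (a : ℕ) = (q : ZMod N) ^ (b : ℕ) := by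
      have := (ZMod.natCast_eq_natCast_iff _ _ _).mpr h1u
      push_cast at this
      exact this
    exact Fin.ext (hqpow_inj _ _ a.2 b.2 h3)
  -- exponents
  set ee : Fin s → Fin n → ℕ := fun j t => (i j * q ^ (t : ℕ)) % N with hee
  have heelt : ∀ j t, ee j t < N := fun j t => Nat.mod_lt _ (by omega)
  have heecast : ∀ j t, ((ee j t : ℕ) : ZMod N) = (i j : ZMod N) * (q : ZMod N) ^ (t : ℕ) := by
    intro j t
    rw [hee]
    simp only
    rw [ZMod.natCast_mod]
    push_cast
    ring
  -- cyclotomic coset as a range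
  have hcosetRange : ∀ m : ℕ, cycCoset q N m =
      Set.range (fun t : Fin n => (m : ZMod N) * (q : ZMod N) ^ (t : ℕ)) := by
    intro m
    ext x
    constructor
    · rintro ⟨k, rfl⟩
      refine ⟨⟨k % n, Nat.mod_lt _ hn⟩, ?_⟩
      simp only
      conv_rhs => rw [pow_mod_of_pow_eq_one hqZ k]
    · rintro ⟨t, rfl⟩
      exact ⟨(t : ℕ), rfl⟩
  -- injectivity within a coset
  have hinj_t : ∀ j, Function.Injective
      (fun t : Fin n => (i j : ZMod N) * (q : ZMod N) ^ (t : ℕ)) := by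
    intro j
    set f : Fin n → ZMod N := fun t => (i j : ZMod N) * (q : ZMod N) ^ (t : ℕ) with hf
    have h1 : Set.range f = ↑(Finset.univ.image f) := by
      rw [Finset.coe_image, Finset.coe_univ, Set.image_univ]
    have h2 : (Finset.univ.image f).card = (Finset.univ : Finset (Fin n)).card := by
      rw [Finset.card_univ, Fintype.card_fin]
      have h3 := hfull j
      rw [hcosetRange (i j), ← hf, h1, Set.ncard_coe_finset] at h3
      exact h3
    have h4 : Set.InjOn f ↑(Finset.univ : Finset (Fin n)) := Finset.card_image_iff.mp h2
    intro a b hab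
    exact h4 (by simp) (by simp) hab
  -- coset equality from a common element
  have hcoset_eq : ∀ (m m' : ℕ) (t t' : Fin n),
      (m : ZMod N) * (q : ZMod N) ^ (t : ℕ) = (m' : ZMod N) * (q : ZMod N) ^ (t' : ℕ) →
      cycCoset q N m = cycCoset q N m' := by
    have key : ∀ (a b : ℕ) (ta tb : Fin n),
        (a : ZMod N) * (q : ZMod N) ^ (ta : ℕ) = (b : ZMod N) * (q : ZMod N) ^ (tb : ℕ) →
        cycCoset q N a ⊆ cycCoset q N b := by
      intro a b ta tb hab x hx
      obtain ⟨k, rfl⟩ := hx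
      refine ⟨(tb : ℕ) + (n - (ta : ℕ)) + k, ?_⟩
      rw [pow_add, pow_add, ← mul_assoc, ← mul_assoc, ← hab, mul_assoc (a : ZMod N),
        ← pow_add, Nat.add_sub_cancel' (le_of_lt ta.2), hqZ, mul_one]
    intro m m' t t' h
    exact Set.Subset.antisymm (key m m' t t' h) (key m' m t' t h.symm)
  -- characters
  let χ : Fin s × Fin n → (Eˣ →* E) := fun jt =>
    (Units.coeHom E).comp (powMonoidHom (ee jt.1 jt.2))
  have hχapp : ∀ (jt : Fin s × Fin n) (x : Eˣ), χ jt x = (x : E) ^ (ee jt.1 jt.2) := by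
    intro jt x
    simp [χ, powMonoidHom]
  have hχinj : Function.Injective χ := by
    rintro ⟨j, t⟩ ⟨j', t'⟩ h
    have h1 : (u : E) ^ ee j t = (u : E) ^ ee j' t' := by
      have h0 : χ (j, t) u = χ (j', t') u := by rw [h]
      rwa [hχapp, hχapp] at h0
    have h1u : u ^ ee j t = u ^ ee j' t' := Units.ext (by
      rw [Units.val_pow_eq_pow_val, Units.val_pow_eq_pow_val]; exact h1)
    rw [pow_eq_pow_iff_modEq, hordu, Nat.ModEq, Nat.mod_eq_of_lt (heelt j t),
      Nat.mod_eq_of_lt (heelt j' t')] at h1u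
    have h3 : (i j : ZMod N) * (q : ZMod N) ^ (t : ℕ) =
        (i j' : ZMod N) * (q : ZMod N) ^ (t' : ℕ) := by
      rw [← heecast, ← heecast, h1u]
    by_cases hjj : j = j'
    · subst hjj
      exact Prod.ext rfl (hinj_t j h3)
    · exact absurd (hcoset_eq _ _ _ _ h3) (hdist j j' hjj)
  -- restate the hypothesis for all units
  have hk : ∀ x : Eˣ, Algebra.trace F E (∑ j, β j * (x : E) ^ (i j)) = 0 := by
    intro x
    obtain ⟨k, rfl⟩ := hsurj x
    have h0 := congrFun hβ k
    simp only [traceWord, Pi.zero_apply] at h0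
    have h1 : (∑ j, β j * ((u ^ (k : ℕ) : Eˣ) : E) ^ (i j)) =
        ∑ j, β j * α ^ ((k : ℕ) * i j) := by
      refine Finset.sum_congr rfl fun j _ => ?_
      rw [Units.val_pow_eq_pow_val, huE, ← pow_mul]
    rw [h1]
    exact h0
  -- the double-sum identity
  have htr : ∀ x : Eˣ, ∑ t : Fin n, ∑ j, (β j) ^ q ^ (t : ℕ) * (x : E) ^ (ee j t) = 0 := by
    intro x
    set y : E := ∑ j, β j * (x : E) ^ (i j) with hy
    have h0 : algebraMap F E (Algebra.trace F E y) = 0 := by rw [hk x, map_zero]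
    rw [trace_eq_sum_automorphisms] at h0
    have hbij : Function.Bijective σ :=
      (Fintype.bijective_iff_injective_and_card σ).mpr ⟨hσinj, by
        rw [Fintype.card_fin, ← Nat.card_eq_fintype_card, IsGalois.card_aut_eq_finrank, hrank]⟩
    have h1 : ∑ t : Fin n, (σ t) y = 0 := by
      have h1' := Fintype.sum_bijective σ hbij (fun t => (σ t) y) (fun g => g y) (fun t => rfl)
      rw [h1']
      exact h0
    have hxN : (x : E) ^ N = 1 := by
      have h2 : x ^ N = 1 := by rw [← hcardu]; exact pow_card_eq_one
      rw [← Units.val_pow_eq_pow_val, h2, Units.val_one]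
    have h2 : ∀ t : Fin n, (σ t) y = ∑ j, (β j) ^ q ^ (t : ℕ) * (x : E) ^ (ee j t) := by
      intro t
      rw [hy, map_sum]
      refine Finset.sum_congr rfl fun j _ => ?_
      rw [map_mul, hσapp, hσapp, ← pow_mul]
      congr 1
      rw [pow_mod_of_pow_eq_one hxN (i j * q ^ (t : ℕ))]
    simp only [h2] at h1
    exact h1
  -- linear independence of characters finishes the proof
  have hLI : LinearIndependent E (fun jt : Fin s × Fin n => ⇑(χ jt)) :=
    (linearIndependent_monoidHom Eˣ E).comp χ hχinj
  rw [Fintype.linearIndependent_iff] at hLI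
  have hzero := hLI (fun jt => (β jt.1) ^ q ^ ((jt.2 : Fin n) : ℕ)) (by
    funext x
    have h0 : (∑ jt : Fin s × Fin n, (β jt.1) ^ q ^ ((jt.2 : Fin n) : ℕ) • ⇑(χ jt)) x
        = ∑ jt : Fin s × Fin n, (β jt.1) ^ q ^ ((jt.2 : Fin n) : ℕ) * (x : E) ^ (ee jt.1 jt.2) := by
      rw [Finset.sum_apply]
      exact Finset.sum_congr rfl fun jt _ => by rw [Pi.smul_apply, smul_eq_mul, hχapp]
    rw [h0, Fintype.sum_prod_type, Finset.sum_comm]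
    exact htr x)
  funext j
  have hz := hzero (j, ⟨0, hn⟩)
  simp only [pow_zero, pow_one] at hz
  exact hz


/-- `C_V` is an `F_q`-linear subcode of the cyclic code `C` iff every
`V_j` is an `F_q`-linear subspace of `F_{q^n}`. -/
theorem codeOf_linear_iff_subspaces
    (p e q n N : ℕ) [Fact p.Prime] (he : 0 < e) (hq : q = p ^ e) (hn : 0 < n)
    (hN : N = q ^ n - 1)
    (F E : Type*) [Field F] [Field E] [Algebra F E]
    (hF : Nat.card F = q) (hE : Nat.card E = q ^ n)
    (α : E) (hα : orderOf α = q ^ n - 1)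
    (s : ℕ) (i : Fin s → ℕ) (hi : ∀ j, 1 ≤ i j)
    (hdist : ∀ j j' : Fin s, j ≠ j' → cycCoset q N (i j) ≠ cycCoset q N (i j'))
    (hfull : ∀ j, (cycCoset q N (i j)).ncard = n)
    (V : Fin s → Set E) :
    (∃ S : Submodule F (Fin N → F), codeOf F N α i V = (S : Set (Fin N → F))) ↔
      (∀ j, ∃ W : Submodule F E, V j = (W : Set E)) := by

  have hinj : ∀ β γ : Fin s → E, traceWord F N α i β = traceWord F N α i γ → β = γ := by
    intro β γ h
    have h0 : traceWordL F N α i (β - γ) = 0 := by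
      rw [map_sub]
      show traceWord F N α i β - traceWord F N α i γ = 0
      rw [h, sub_self]
    have h1 := traceWord_inj p e q n N he hq hn hN F E hF hE α hα s i hi hdist hfull
      (β - γ) h0
    exact sub_eq_zero.mp h1
  constructor
  · rintro ⟨S, hS⟩ j
    have h0mem : (0 : Fin N → F) ∈ codeOf F N α i V := by rw [hS]; exact S.zero_mem
    obtain ⟨γ, hγ, hγ0⟩ := h0mem
    have hγzero : γ = 0 := by
      apply hinj
      rw [← hγ0]
      exact (map_zero (traceWordL F N α i)).symm
    have hmemS : ∀ β : Fin s → E, (∀ j', β j' ∈ V j') → traceWord F N α i β ∈ S := by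
      intro β hb
      have hmem : traceWord F N α i β ∈ codeOf F N α i V := ⟨β, hb, rfl⟩
      rw [hS] at hmem
      exact hmem
    have hupd : ∀ (a : E), a ∈ V j → ∀ j', Function.update γ j a j' ∈ V j' := by
      intro a ha j'
      rcases eq_or_ne j' j with rfl | hne
      · simpa using ha
      · simpa [Function.update_of_ne hne] using hγ j'
    have hback : ∀ w : Fin N → F, w ∈ S → ∃ δ : Fin s → E,
        (∀ j', δ j' ∈ V j') ∧ w = traceWord F N α i δ := by
      intro w hw
      have hw' : w ∈ (S : Set (Fin N → F)) := hw
      rw [← hS] at hw'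
      exact hw'
    refine ⟨{ carrier := V j
              add_mem' := ?_
              zero_mem' := ?_
              smul_mem' := ?_ }, rfl⟩
    · intro a b ha hb
      have hSa := hmemS _ (hupd a ha)
      have hSb := hmemS _ (hupd b hb)
      obtain ⟨δ, hδ, hδeq⟩ := hback _ (S.add_mem hSa hSb)
      have hδ2 : Function.update γ j a + Function.update γ j b = δ := by
        apply hinj
        rw [← hδeq]
        exact map_add (traceWordL F N α i) (Function.update γ j a) (Function.update γ j b)
      have := hδ j
      rw [← hδ2] at this
      simpa using this
    · have := hγ j
      rw [hγzero] at this
      simpa using this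
    · intro c a ha
      have hSa := hmemS _ (hupd a ha)
      obtain ⟨δ, hδ, hδeq⟩ := hback _ (S.smul_mem c hSa)
      have hδ2 : c • Function.update γ j a = δ := by
        apply hinj
        rw [← hδeq]
        exact map_smul (traceWordL F N α i) c (Function.update γ j a)
      have := hδ j
      rw [← hδ2] at this
      simpa using this
  · intro hW
    choose W hWeq using hW
    refine ⟨Submodule.map (traceWordL F N α i) (Submodule.pi Set.univ W), ?_⟩
    ext w
    simp only [codeOf, Set.mem_setOf_eq, SetLike.mem_coe, Submodule.mem_map, Submodule.mem_pi]
    constructor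
    · rintro ⟨β, hb, rfl⟩
      refine ⟨β, fun j _ => ?_, rfl⟩
      have := hb j
      rwa [hWeq j, SetLike.mem_coe] at this
    · rintro ⟨β, hb, rfl⟩
      refine ⟨β, fun j => ?_, rfl⟩
      rw [hWeq j, SetLike.mem_coe]
      exact hb j (Set.mem_univ j)
end

section
/- Fix j ∈ {1,…,s}, let V_j ⊆ F_{q^n} be an F_q-linear subspace, and let C'_j = {(Tr_{F_{q^n}/F_q}(β_j α^{k i_j}))_{0 ≤ k ≤ N−1} : β_j ∈ V_j}. Then C'_j is a quasi-cyclic code of index ℓ_j if and only if V_j is a vector space over the subfield F_q(α^{ℓ_j i_j}) of F_{q^n} and ℓ_j is the minimal positive integer with this property. -/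
open scoped BigOperators

open QCSub

section Helpers

variable {F E : Type*} [Field F] [Field E] [Algebra F E]

lemma span_powers_top (x : E) [FiniteDimensional F E]
    (htop : ∀ y : E, y ∈ IntermediateField.adjoin F {x}) :
    Submodule.span F (Set.range fun k : ℕ => x ^ k) = ⊤ := by
  rw [eq_top_iff]
  rintro y -
  have hy : y ∈ Algebra.adjoin F {x} := by
    rw [← IntermediateField.adjoin_simple_toSubalgebra_of_isAlgebraic
      (Algebra.IsIntegral.isIntegral x).isAlgebraic]
    exact htop y
  rw [Algebra.adjoin_singleton_eq_range_aeval] at hy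
  obtain ⟨p, hp⟩ := hy
  have hp' : Polynomial.aeval x p = y := hp
  rw [← hp', Polynomial.aeval_eq_sum_range]
  exact Submodule.sum_mem _ fun i _ => Submodule.smul_mem _ _
    (Submodule.subset_span ⟨i, rfl⟩)

lemma trace_inj {N : ℕ} (x : E) [FiniteDimensional F E] [Algebra.IsSeparable F E]
    (hspan : Submodule.span F (Set.range fun k : ℕ => x ^ k) = ⊤)
    (hxN : x ^ N = 1) (hN : 0 < N)
    (β : E) (h : ∀ k : Fin N, Algebra.trace F E (β * x ^ (k : ℕ)) = 0) : β = 0 := by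
  apply (traceForm_nondegenerate F E).1 β
  intro y
  have hker : Submodule.span F (Set.range fun k : ℕ => x ^ k)
      ≤ LinearMap.ker ((Algebra.traceForm F E) β) := by
    rw [Submodule.span_le]
    rintro _ ⟨k, rfl⟩
    simp only [SetLike.mem_coe, LinearMap.mem_ker]
    have hx : x ^ k = x ^ (k % N) := by
      conv_lhs => rw [← Nat.div_add_mod k N, pow_add, pow_mul, hxN, one_pow, one_mul]
    rw [Algebra.traceForm_apply, hx]
    exact h ⟨k % N, Nat.mod_lt _ hN⟩
  have : y ∈ LinearMap.ker ((Algebra.traceForm F E) β) := hker (hspan ▸ Submodule.mem_top)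
  exact LinearMap.mem_ker.mp this

end Helpers

/-- Proposition on quasi-cyclicity of `C'_j`. For an `F_q`-subspace
`V ⊆ F_{q^n}`, the code `C'_j = {(Tr(β α^{k i_j}))_k : β ∈ V}` is quasi-cyclic of index
`ℓ_j` iff `V` is a vector space over `F_q(α^{ℓ_j i_j})` and `ℓ_j` is the minimal positive
integer with this property. -/
theorem isQC_iff_spanOver_adjoin
    (p e q n N : ℕ) [Fact p.Prime] (he : 0 < e) (hq : q = p ^ e) (hn : 0 < n)
    (hN : N = q ^ n - 1)
    (F E : Type*) [Field F] [Field E] [Algebra F E]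
    (hF : Nat.card F = q) (hE : Nat.card E = q ^ n)
    (α : E) (hα : orderOf α = q ^ n - 1)
    (i₀ : ℕ) (hi₀ : 1 ≤ i₀) (hfull : (cycCoset q N i₀).ncard = n)
    (V : Submodule F E) (ℓ : ℕ) :
    IsQCOfIndex (codeOf F N α (fun _ : Fin 1 => i₀) (fun _ => (V : Set E))) ℓ ↔
      (0 < ℓ ∧ SpanOver V (IntermediateField.adjoin F {α ^ (ℓ * i₀)}) ∧
        ∀ m : ℕ, 0 < m → SpanOver V (IntermediateField.adjoin F {α ^ (m * i₀)}) → ℓ ≤ m) := by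
  -- numerics
  have hp2 : 2 ≤ p := (Fact.out : p.Prime).two_le
  have hq2 : 2 ≤ q := by
    calc 2 ≤ p := hp2
    _ = p ^ 1 := (pow_one p).symm
    _ ≤ p ^ e := Nat.pow_le_pow_right (by omega) he
    _ = q := hq.symm
  have hqn2 : 2 ≤ q ^ n := by
    calc 2 ≤ q := hq2
    _ = q ^ 1 := (pow_one q).symm
    _ ≤ q ^ n := Nat.pow_le_pow_right (by omega) hn
  have hNpos : 0 < N := by omega
  haveI : NeZero N := ⟨by omega⟩
  -- finiteness
  haveI : Finite F := (Nat.card_ne_zero.mp (by omega : Nat.card F ≠ 0)).2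
  haveI : Finite E := (Nat.card_ne_zero.mp (by omega : Nat.card E ≠ 0)).2
  haveI : Module.Finite F E := Module.finite_iff_finite.mpr ‹Finite E›
  haveI : Fintype F := Fintype.ofFinite F
  haveI : Fintype E := Fintype.ofFinite E
  have hcardF : Fintype.card F = q := by rw [← Nat.card_eq_fintype_card]; exact hF
  have hcardE : Fintype.card E = q ^ n := by rw [← Nat.card_eq_fintype_card]; exact hE
  -- rank
  have hrank : Module.finrank F E = n := by
    have h1 : Fintype.card E = Fintype.card F ^ Module.finrank F E := Module.card_eq_pow_finrank
    rw [hcardE, hcardF] at h1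
    exact (Nat.pow_right_injective hq2 h1).symm
  -- α basics
  have hαN : α ^ N = 1 := by rw [hN, ← hα]; exact pow_orderOf_eq_one α
  have hα0 : α ≠ 0 := by
    intro h0
    have : (0 : E) ^ N = 1 := by rw [← h0]; exact hαN
    rw [zero_pow (by omega)] at this
    exact zero_ne_one this
  set x : E := α ^ i₀ with hxdef
  have hx0 : x ≠ 0 := pow_ne_zero _ hα0
  have hxN : x ^ N = 1 := by rw [hxdef, ← pow_mul, mul_comm, pow_mul, hαN, one_pow]
  have hxm : ∀ m : ℕ, α ^ (m * i₀) = x ^ m := fun m => by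
    rw [hxdef, ← pow_mul, mul_comm]
  have hredx : ∀ a : ℕ, x ^ a = x ^ (a % N) := fun a => by
    conv_lhs => rw [← Nat.div_add_mod a N, pow_add, pow_mul, hxN, one_pow, one_mul]
  -- Step 1: F⟮x⟯ = ⊤
  set K : IntermediateField F E := IntermediateField.adjoin F {x} with hKdef
  haveI : FiniteDimensional F K := inferInstance
  set d : ℕ := Module.finrank F K with hddef
  have hd_pos : 0 < d := Module.finrank_pos
  have hd_le : d ≤ n := by
    rw [← hrank, hddef, ← IntermediateField.finrank_eq_finrank_subalgebra]
    have := (Subalgebra.toSubmodule K.toSubalgebra).finrank_le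
    rwa [(Subalgebra.toSubmoduleEquiv K.toSubalgebra).finrank_eq] at this
  haveI : Fintype K := Fintype.ofFinite K
  have hcardK : Fintype.card K = q ^ d := by
    rw [Module.card_eq_pow_finrank (K := F) (V := K), hcardF, hddef]
  have hgen : x ^ q ^ d = x := by
    have h := FiniteField.pow_card (⟨x, IntermediateField.mem_adjoin_simple_self F x⟩ : K)
    rw [hcardK] at h
    have := Subtype.ext_iff.mp h
    push_cast at this
    simpa using this
  have hmod : (i₀ : ZMod N) * (q : ZMod N) ^ d = (i₀ : ZMod N) := by
    have hle : i₀ ≤ i₀ * q ^ d := Nat.le_mul_of_pos_right _ (by positivity)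
    have h1 : α ^ (i₀ * q ^ d) = α ^ i₀ := by rw [pow_mul]; exact hgen
    have h2 : α ^ (i₀ * q ^ d - i₀) * α ^ i₀ = α ^ i₀ := by
      rw [← pow_add, Nat.sub_add_cancel hle]; exact h1
    have h3 : α ^ (i₀ * q ^ d - i₀) = 1 :=
      mul_right_cancel₀ (pow_ne_zero _ hα0) (by rw [h2, one_mul])
    have h4 : N ∣ i₀ * q ^ d - i₀ := by
      rw [hN, ← hα]; exact orderOf_dvd_of_pow_eq_one h3
    have h5 : i₀ ≡ i₀ * q ^ d [MOD N] := (Nat.modEq_iff_dvd' hle).mpr h4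
    have h6 := (ZMod.natCast_eq_natCast_iff _ _ _).mpr h5
    push_cast at h6
    exact h6.symm
  have hr : ∀ k : ℕ, ∃ r < d, (i₀ : ZMod N) * (q : ZMod N) ^ k
      = (i₀ : ZMod N) * (q : ZMod N) ^ r := by
    intro k
    induction k using Nat.strong_induction_on with
    | _ k ih =>
      by_cases hk : k < d
      · exact ⟨k, hk, rfl⟩
      · have hk' : d + (k - d) = k := by omega
        obtain ⟨r, hrd, he'⟩ := ih (k - d) (by omega)
        refine ⟨r, hrd, ?_⟩
        rw [← hk', pow_add, ← mul_assoc, hmod, he']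
  have hn_le : n ≤ d := by
    rw [← hfull]
    have hsubset : cycCoset q N i₀ ⊆
        (fun k : Fin d => (i₀ : ZMod N) * (q : ZMod N) ^ (k : ℕ)) '' Set.univ := by
      rintro z ⟨k, rfl⟩
      obtain ⟨r, h1, h2⟩ := hr k
      exact ⟨⟨r, h1⟩, trivial, h2.symm⟩
    calc (cycCoset q N i₀).ncard
        ≤ ((fun k : Fin d => (i₀ : ZMod N) * (q : ZMod N) ^ (k : ℕ)) '' Set.univ).ncard :=
          Set.ncard_le_ncard hsubset (Set.toFinite _)
      _ ≤ (Set.univ : Set (Fin d)).ncard := Set.ncard_image_le (Set.toFinite _)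
      _ = d := by simp [Set.ncard_univ]
  have hd : d = n := le_antisymm hd_le hn_le
  have htop : ∀ y : E, y ∈ K := by
    have htopsub : Subalgebra.toSubmodule K.toSubalgebra = ⊤ := by
      apply Submodule.eq_top_of_finrank_eq
      rw [(Subalgebra.toSubmoduleEquiv K.toSubalgebra).finrank_eq,
        IntermediateField.finrank_eq_finrank_subalgebra, ← hddef, hd, hrank]
    intro y
    have : y ∈ Subalgebra.toSubmodule K.toSubalgebra := htopsub ▸ Submodule.mem_top
    exact this
  have hspan := span_powers_top (F := F) x htop
  -- injectivity
  have hinj : ∀ β γ : Fin 1 → E,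
      traceWord F N α (fun _ : Fin 1 => i₀) β = traceWord F N α (fun _ : Fin 1 => i₀) γ →
      β 0 = γ 0 := by
    intro β γ hbg
    have h0 : ∀ k : Fin N, Algebra.trace F E ((β 0 - γ 0) * x ^ (k : ℕ)) = 0 := by
      intro k
      have hk := congrFun hbg k
      simp only [traceWord, Fin.sum_univ_one] at hk
      rw [hxm (k : ℕ)] at hk
      rw [sub_mul, map_sub, sub_eq_zero]
      exact hk
    exact sub_eq_zero.mp (trace_inj (F := F) x hspan hxN hNpos (β 0 - γ 0) h0)
  -- normal form of traceWord
  have hTW : ∀ (β : Fin 1 → E) (k : Fin N),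
      traceWord F N α (fun _ : Fin 1 => i₀) β k = Algebra.trace F E (β 0 * x ^ (k : ℕ)) := by
    intro β k
    simp only [traceWord, Fin.sum_univ_one, hxm]
  -- single shift
  have hshift1 : ∀ β : Fin 1 → E,
      shift (traceWord F N α (fun _ : Fin 1 => i₀) β)
        = traceWord F N α (fun _ : Fin 1 => i₀) (fun j => x ^ (N - 1) * β j) := by
    intro β
    funext k
    show traceWord F N α (fun _ : Fin 1 => i₀) β ⟨((k : ℕ) + (N - 1)) % N, _⟩ = _
    rw [hTW, hTW]
    congr 1
    rw [← hredx ((k : ℕ) + (N - 1)), pow_add]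
    ring
  -- iterated shift
  have hshift : ∀ (m : ℕ) (β : Fin 1 → E),
      shift^[m] (traceWord F N α (fun _ : Fin 1 => i₀) β)
        = traceWord F N α (fun _ : Fin 1 => i₀) (fun j => (x ^ (N - 1)) ^ m * β j) := by
    intro m
    induction m with
    | zero => intro β; simp
    | succ m ih =>
      intro β
      rw [Function.iterate_succ_apply', ih β, hshift1]
      congr 1
      funext j
      rw [pow_succ]
      ring
  set C : Set (Fin N → F) := codeOf F N α (fun _ : Fin 1 => i₀) (fun _ => (V : Set E)) with hC
  -- the key equivalence
  have key : ∀ m : ℕ, (shift^[m] '' C = C) ↔ (∀ v ∈ V, x ^ m * v ∈ V) := by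
    intro m
    have hcan : ∀ y : E, (x ^ (N - 1)) ^ m * (x ^ m * y) = y := by
      intro y
      rw [← pow_mul, ← mul_assoc, ← pow_add]
      have : (N - 1) * m + m = N * m := by
        rw [Nat.sub_one_mul, Nat.sub_add_cancel (Nat.le_mul_of_pos_left m hNpos)]
      rw [this, pow_mul, hxN, one_pow, one_mul]
    constructor
    · intro hIm v hv
      have h1 : traceWord F N α (fun _ : Fin 1 => i₀) (fun _ : Fin 1 => v) ∈ C :=
        ⟨fun _ => v, fun _ => hv, rfl⟩
      rw [← hIm] at h1
      obtain ⟨w, ⟨β, hβ, rfl⟩, hw⟩ := h1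
      rw [hshift] at hw
      have hbv : (x ^ (N - 1)) ^ m * β 0 = v := hinj _ _ hw
      have hxv : x ^ m * v = β 0 := by
        rw [← hbv, mul_left_comm]
        exact hcan (β 0)
      rw [hxv]
      exact hβ 0
    · intro hV
      -- closure under the "inverse" multiplier
      have hVc : ∀ v ∈ V, (x ^ (N - 1)) ^ m * v ∈ V := by
        intro v hv
        -- multiplication by x^m on V is surjective
        have hinjf : Function.Injective (fun w : V => (⟨x ^ m * (w : E), hV _ w.2⟩ : V)) := by
          intro a b hab
          have := Subtype.ext_iff.mp hab
          exact Subtype.ext (mul_left_cancel₀ (pow_ne_zero m hx0) this)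
        have hsurf := Finite.injective_iff_surjective.mp hinjf
        obtain ⟨⟨v', hv'⟩, hvv⟩ := hsurf ⟨v, hv⟩
        have hvv' : x ^ m * v' = v := Subtype.ext_iff.mp hvv
        have : (x ^ (N - 1)) ^ m * v = v' := by rw [← hvv']; exact hcan v'
        rw [this]; exact hv'
      ext w
      constructor
      · rintro ⟨w', ⟨β, hβ, rfl⟩, rfl⟩
        rw [hshift]
        exact ⟨_, fun j => hVc _ (hβ j), rfl⟩
      · rintro ⟨γ, hγ, rfl⟩
        refine ⟨traceWord F N α (fun _ : Fin 1 => i₀) (fun j => x ^ m * γ j),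
          ⟨fun j => x ^ m * γ j, fun j => hV _ (hγ j), rfl⟩, ?_⟩
        rw [hshift]
        have : (fun j : Fin 1 => (x ^ (N - 1)) ^ m * (x ^ m * γ j)) = γ :=
          funext fun j => hcan (γ j)
        rw [this]
  -- SpanOver equivalence
  have hSpanIff : ∀ m : ℕ,
      SpanOver V (IntermediateField.adjoin F {α ^ (m * i₀)}) ↔ (∀ v ∈ V, x ^ m * v ∈ V) := by
    intro m
    rw [hxm m]
    constructor
    · intro h v hv
      exact h _ (IntermediateField.mem_adjoin_simple_self F (x ^ m)) v hv
    · intro h c hc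
      rw [← IntermediateField.mem_toSubalgebra,
        IntermediateField.adjoin_simple_toSubalgebra_of_isAlgebraic
          (Algebra.IsIntegral.isIntegral (x ^ m)).isAlgebraic] at hc
      induction hc using Algebra.adjoin_induction with
      | mem z hz =>
        rw [Set.mem_singleton_iff] at hz
        subst hz
        exact h
      | algebraMap r =>
        intro v hv
        rw [Algebra.algebraMap_eq_smul_one, smul_mul_assoc, one_mul]
        exact V.smul_mem r hv
      | add a b ha hb iha ihb =>
        intro v hv
        rw [add_mul]
        exact V.add_mem (iha v hv) (ihb v hv)
      | mul a b ha hb iha ihb =>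
        intro v hv
        rw [mul_assoc]
        exact iha _ (ihb v hv)
  -- assemble
  have hPQ : ∀ m : ℕ, (shift^[m] '' C = C) ↔
      SpanOver V (IntermediateField.adjoin F {α ^ (m * i₀)}) :=
    fun m => (key m).trans (hSpanIff m).symm
  constructor
  · rintro ⟨h1, h2, h3⟩
    exact ⟨h1, (hPQ ℓ).mp h2, fun m hm hsp => h3 m hm ((hPQ m).mpr hsp)⟩
  · rintro ⟨h1, h2, h3⟩
    exact ⟨h1, (hPQ ℓ).mpr h2, fun m hm him => h3 m hm ((hPQ m).mp him)⟩
end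

section
/- Suppose the q-cyclotomic coset of i_j mod N has size n for 1 ≤ j ≤ r and size δ_j < n for r+1 ≤ j ≤ s. Then for tuples V = (V_1,…,V_s) and W = (W_1,…,W_s) of F_q-linear subspaces of F_{q^n}, C_V = C_W if and only if V_j = W_j for 1 ≤ j ≤ r and Tr_{F_{q^n}/F_{q^{δ_j}}}(V_j) = Tr_{F_{q^n}/F_{q^{δ_j}}}(W_j) for r+1 ≤ j ≤ s. -/
open scoped BigOperators

open QCSub


namespace QCAux


open Finset



/-- In a field, at most `d` elements satisfy `x ^ d = x`, provided `1 < d`. -/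
lemma card_pow_eq_le (B : Type*) [Field B] [Fintype B] [DecidableEq B] {d : ℕ} (hd : 1 < d) :
    (Finset.univ.filter fun x : B => x ^ d = x).card ≤ d := by
  classical
  have hne : (Polynomial.X ^ d - Polynomial.X : Polynomial B) ≠ 0 := by
    intro h
    have hdeg := FiniteField.X_pow_card_sub_X_natDegree_eq B hd
    rw [h] at hdeg
    simp at hdeg
    omega
  have hsub : (Finset.univ.filter fun x : B => x ^ d = x)
      ⊆ (Polynomial.X ^ d - Polynomial.X : Polynomial B).roots.toFinset := by
    intro x hx
    rw [Finset.mem_filter] at hx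
    rw [Multiset.mem_toFinset, Polynomial.mem_roots hne]
    simp [Polynomial.IsRoot, sub_eq_zero, hx.2]
  calc (Finset.univ.filter fun x : B => x ^ d = x).card
      ≤ (Polynomial.X ^ d - Polynomial.X : Polynomial B).roots.toFinset.card :=
        Finset.card_le_card hsub
    _ ≤ Multiset.card (Polynomial.X ^ d - Polynomial.X : Polynomial B).roots :=
        Multiset.toFinset_card_le _
    _ ≤ (Polynomial.X ^ d - Polynomial.X : Polynomial B).natDegree := Polynomial.card_roots' _
    _ = d := FiniteField.X_pow_card_sub_X_natDegree_eq B hd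





lemma trace_frobenius (A B : Type*) [Field A] [Field B] [Algebra A B] [Finite B] (x : B) :
    algebraMap A B (Algebra.trace A B x) =
      ∑ t ∈ Finset.range (Module.finrank A B), x ^ Nat.card A ^ t := by
  classical
  haveI : Finite A := Finite.of_injective _ (algebraMap A B).injective
  haveI : Fintype A := Fintype.ofFinite A
  haveI : Fintype B := Fintype.ofFinite B
  set p := ringChar A with hpdef
  haveI hp : Fact p.Prime := ⟨CharP.char_is_prime A p⟩
  obtain ⟨e, hcard⟩ := FiniteField.card A p
  haveI : CharP B p := charP_of_injective_algebraMap' A p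
  set Q := Fintype.card A with hQdef
  have hQ1 : 1 < Q := Fintype.one_lt_card
  have hfr : ∀ y : B, iterateFrobenius B p (e : ℕ) y = y ^ Q := by
    intro y; rw [iterateFrobenius_def, hcard.2]
  let f : B →ₐ[A] B :=
    { toRingHom := iterateFrobenius B p (e : ℕ)
      commutes' := fun a => by
        show iterateFrobenius B p (e : ℕ) (algebraMap A B a) = algebraMap A B a
        rw [hfr, ← map_pow, FiniteField.pow_card] }
  have hfbij : Function.Bijective f :=
    (Finite.injective_iff_bijective).mp (f.toRingHom.injective)
  let φ : B ≃ₐ[A] B := AlgEquiv.ofBijective f hfbij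
  have hφ : ∀ y : B, φ y = y ^ Q := fun y => hfr y
  have hpow : ∀ (t : ℕ) (y : B), (φ ^ t) y = y ^ Q ^ t := by
    intro t
    induction t with
    | zero => intro y; simp
    | succ t ih =>
      intro y
      rw [pow_succ, AlgEquiv.mul_apply, hφ, ih, pow_succ', pow_mul]
  set m := Module.finrank A B with hmdef
  have hQm : Q ^ m = Fintype.card B := (Module.card_eq_pow_finrank (K := A) (V := B)).symm
  have hφm : φ ^ m = 1 := by
    ext y
    rw [hpow, hQm, FiniteField.pow_card, AlgEquiv.one_apply]
  have horder : orderOf φ = m := by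
    have hdvd : orderOf φ ∣ m := orderOf_dvd_of_pow_eq_one hφm
    have hm0 : 0 < m := Module.finrank_pos
    have hO : 0 < orderOf φ := orderOf_pos φ
    rcases lt_or_eq_of_le (Nat.le_of_dvd hm0 hdvd) with hlt | heq
    · exfalso
      set d := orderOf φ with hddef
      have hall : ∀ y : B, y ^ Q ^ d = y := by
        intro y
        have := hpow d y
        rw [pow_orderOf_eq_one φ, AlgEquiv.one_apply] at this
        exact this.symm
      have hfil : (Finset.univ.filter fun y : B => y ^ Q ^ d = y) = Finset.univ := by
        apply Finset.filter_true_of_mem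
        intro y _; exact hall y
      have h1 : 1 < Q ^ d := Nat.one_lt_pow hO.ne' hQ1
      have hle := card_pow_eq_le B h1
      rw [hfil, Finset.card_univ] at hle
      have hlt2 : Q ^ d < Q ^ m := Nat.pow_lt_pow_right hQ1 hlt
      rw [hQm] at hlt2
      omega
    · exact heq
  have hcardG : Fintype.card (B ≃ₐ[A] B) = m := by
    rw [← Nat.card_eq_fintype_card]; exact IsGalois.card_aut_eq_finrank A B
  have hbij : Function.Bijective (fun t : Fin m => φ ^ (t : ℕ)) := by
    rw [Fintype.bijective_iff_injective_and_card]
    constructor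
    · intro a b hab
      have := (pow_eq_pow_iff_modEq).mp hab
      rw [horder] at this
      have : (a : ℕ) % m = (b : ℕ) % m := this
      rwa [Nat.mod_eq_of_lt a.isLt, Nat.mod_eq_of_lt b.isLt, ← Fin.ext_iff] at this
    · simp [hcardG]
  rw [trace_eq_sum_automorphisms]
  rw [← Fintype.sum_bijective _ hbij (fun t => x ^ Q ^ (t : ℕ)) _ (fun t => (hpow t x).symm)]
  rw [← Fin.sum_univ_eq_sum_range (fun t => x ^ Nat.card A ^ t) m]
  simp [hQdef, Nat.card_eq_fintype_card]



open QCSub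


lemma cycCoset_subset (q n N : ℕ) (hn : 0 < n) (hqn : ((q : ZMod N)) ^ n = 1)
    {i i' t t' : ℕ} (h : (i : ZMod N) * (q : ZMod N) ^ t = (i' : ZMod N) * (q : ZMod N) ^ t') :
    cycCoset q N i ⊆ cycCoset q N i' := by
  have h1 : ((q : ZMod N)) ^ (t + t * (n - 1)) = 1 := by
    have ht : t + t * (n - 1) = n * t := by
      cases n with
      | zero => omega
      | succ n => simp [Nat.succ_sub_one]; ring
    rw [ht, pow_mul, hqn, one_pow]
  have key : (i : ZMod N) = (i' : ZMod N) * (q : ZMod N) ^ (t' + t * (n - 1)) := by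
    calc (i : ZMod N) = (i : ZMod N) * (q : ZMod N) ^ (t + t * (n - 1)) := by rw [h1, mul_one]
      _ = ((i : ZMod N) * (q : ZMod N) ^ t) * (q : ZMod N) ^ (t * (n - 1)) := by
          rw [pow_add]; ring
      _ = ((i' : ZMod N) * (q : ZMod N) ^ t') * (q : ZMod N) ^ (t * (n - 1)) := by rw [h]
      _ = (i' : ZMod N) * (q : ZMod N) ^ (t' + t * (n - 1)) := by rw [pow_add]; ring
  rintro x ⟨k, rfl⟩
  exact ⟨t' + t * (n - 1) + k, by rw [key, pow_add]; ring⟩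

lemma cycCoset_eq_of_rel (q n N : ℕ) (hn : 0 < n) (hqn : ((q : ZMod N)) ^ n = 1)
    {i i' t t' : ℕ} (h : (i : ZMod N) * (q : ZMod N) ^ t = (i' : ZMod N) * (q : ZMod N) ^ t') :
    cycCoset q N i = cycCoset q N i' :=
  Set.Subset.antisymm (cycCoset_subset q n N hn hqn h) (cycCoset_subset q n N hn hqn h.symm)

lemma coset_period (q n N i d : ℕ) (hn : 0 < n) [NeZero N]
    (hqn : ((q : ZMod N)) ^ n = 1)
    (hd : (cycCoset q N i).ncard = d) :
    0 < d ∧ ((i : ZMod N) * (q : ZMod N) ^ d = i) ∧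
      ∀ a b : ℕ, a < d → b < d →
        (i : ZMod N) * (q : ZMod N) ^ a = (i : ZMod N) * (q : ZMod N) ^ b → a = b := by
  classical
  have hqu : IsUnit (q : ZMod N) := by
    refine IsUnit.of_mul_eq_one ((q : ZMod N) ^ (n - 1)) ?_
    have hn1 : (n - 1) + 1 = n := by omega
    rw [← pow_succ', hn1, hqn]
  have hPn : 0 < n ∧ (i : ZMod N) * (q : ZMod N) ^ n = i := ⟨hn, by rw [hqn, mul_one]⟩
  have hex : ∃ t : ℕ, 0 < t ∧ (i : ZMod N) * (q : ZMod N) ^ t = i := ⟨n, hPn⟩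
  set d₀ := Nat.find hex with hd₀def
  obtain ⟨hd₀pos, hd₀per⟩ := Nat.find_spec hex
  have step : ∀ t : ℕ, (i : ZMod N) * (q : ZMod N) ^ (d₀ + t) = (i : ZMod N) * (q : ZMod N) ^ t := by
    intro t; rw [pow_add, ← mul_assoc, hd₀per]
  have reduce : ∀ m t : ℕ,
      (i : ZMod N) * (q : ZMod N) ^ (d₀ * m + t) = (i : ZMod N) * (q : ZMod N) ^ t := by
    intro m
    induction m with
    | zero => intro t; simp
    | succ m ih =>
      intro t
      have : d₀ * (m + 1) + t = d₀ + (d₀ * m + t) := by ring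
      rw [this, step, ih]
  have hinj : ∀ a b : ℕ, a < d₀ → b < d₀ →
      (i : ZMod N) * (q : ZMod N) ^ a = (i : ZMod N) * (q : ZMod N) ^ b → a = b := by
    have key : ∀ a b : ℕ, a < b → b < d₀ →
        (i : ZMod N) * (q : ZMod N) ^ a = (i : ZMod N) * (q : ZMod N) ^ b → False := by
      intro a b hab hbd habq
      have hc : b = a + (b - a) := by omega
      rw [hc, pow_add, ← mul_assoc] at habq
      have h2 : ((q : ZMod N) ^ a) * (i : ZMod N) =
          ((q : ZMod N) ^ a) * ((i : ZMod N) * (q : ZMod N) ^ (b - a)) := by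
        rw [mul_comm ((q : ZMod N) ^ a)]; rw [habq]; ring
      have h3 := (hqu.pow a).mul_left_cancel h2
      exact Nat.find_min hex (by omega : b - a < d₀) ⟨by omega, h3.symm⟩
    intro a b ha hb h
    rcases lt_trichotomy a b with hlt | heq | hgt
    · exact absurd (key a b hlt hb h) (fun x => x)
    · exact heq
    · exact absurd (key b a hgt ha h.symm) (fun x => x)
  have hcoset : cycCoset q N i =
      ↑((Finset.range d₀).image fun t => (i : ZMod N) * (q : ZMod N) ^ t) := by
    ext x
    simp only [cycCoset, Set.mem_setOf_eq, Finset.coe_image, Finset.coe_range, Set.mem_image,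
      Set.mem_Iio]
    constructor
    · rintro ⟨k, rfl⟩
      refine ⟨k % d₀, Nat.mod_lt _ hd₀pos, ?_⟩
      have := reduce (k / d₀) (k % d₀)
      rw [Nat.div_add_mod] at this
      exact this.symm
    · rintro ⟨t, _, rfl⟩
      exact ⟨t, rfl⟩
  have hcard : (cycCoset q N i).ncard = d₀ := by
    rw [hcoset, Set.ncard_coe_finset, Finset.card_image_of_injOn, Finset.card_range]
    intro a ha b hb h
    exact hinj a b (Finset.mem_range.mp ha) (Finset.mem_range.mp hb) h
  have hdd : d = d₀ := by rw [← hd, hcard]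
  subst hdd
  exact ⟨hd₀pos, hd₀per, hinj⟩

lemma pow_card_of_mem {F E : Type*} [Field F] [Field E] [Algebra F E] [Finite E]
    (K : IntermediateField F E) {y : E} (hy : y ∈ K) : y ^ Nat.card K = y := by
  haveI : Fintype K := Fintype.ofFinite K
  have h := FiniteField.pow_card (⟨y, hy⟩ : K)
  rw [Nat.card_eq_fintype_card]
  have h2 := Subtype.ext_iff.mp h
  push_cast at h2
  exact h2

lemma mem_of_pow_card {F E : Type*} [Field F] [Field E] [Algebra F E] [Finite E]
    (K : IntermediateField F E) {y : E} (h1 : 1 < Nat.card K) (hy : y ^ Nat.card K = y) :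
    y ∈ K := by
  classical
  haveI : Fintype E := Fintype.ofFinite E
  haveI : Fintype K := Fintype.ofFinite K
  set S := (Finset.univ.filter fun x : E => x ^ Nat.card K = x) with hS
  have hsub : (Finset.univ.image fun x : K => (x : E)) ⊆ S := by
    intro x hx
    rw [Finset.mem_image] at hx
    obtain ⟨z, _, rfl⟩ := hx
    rw [hS, Finset.mem_filter]
    exact ⟨Finset.mem_univ _, pow_card_of_mem K z.2⟩
  have hcard1 : (Finset.univ.image fun x : K => (x : E)).card = Nat.card K := by
    rw [Finset.card_image_of_injective _ Subtype.val_injective, Finset.card_univ,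
      Nat.card_eq_fintype_card]
  have hcard2 : S.card ≤ Nat.card K := card_pow_eq_le E h1
  have heq : (Finset.univ.image fun x : K => (x : E)) = S :=
    Finset.eq_of_subset_of_card_le hsub (by omega)
  have hyS : y ∈ S := by rw [hS, Finset.mem_filter]; exact ⟨Finset.mem_univ _, hy⟩
  rw [← heq, Finset.mem_image] at hyS
  obtain ⟨z, _, rfl⟩ := hyS
  exact z.2

lemma sum_range_mul_decomp {M : Type*} [AddCommMonoid M] (f : ℕ → M) (m d : ℕ) :
    ∑ t ∈ Finset.range (m * d), f t
      = ∑ u ∈ Finset.range m, ∑ t ∈ Finset.range d, f (d * u + t) := by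
  induction m with
  | zero => simp
  | succ m ih =>
    rw [Nat.succ_mul, Finset.sum_range_add, ih, Finset.sum_range_succ]
    congr 1
    refine Finset.sum_congr rfl fun t _ => ?_
    congr 1
    ring

lemma keyKernel
    (q n N : ℕ) (hq1 : 1 < q) (hn : 0 < n) (hN : N = q ^ n - 1)
    (F E : Type*) [Field F] [Field E] [Algebra F E] [Finite E]
    (hF : Nat.card F = q) (hE : Nat.card E = q ^ n)
    (α : E) (hα : orderOf α = N)
    {s : ℕ} (i : Fin s → ℕ)
    (hdist : ∀ j j' : Fin s, j ≠ j' → cycCoset q N (i j) ≠ cycCoset q N (i j'))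
    (d : Fin s → ℕ) (hd : ∀ j, (cycCoset q N (i j)).ncard = d j) (hdn : ∀ j, d j ∣ n)
    (c : Fin s → E)
    (H : ∀ k : ℕ, ∑ j, Algebra.trace F E (c j * α ^ (k * i j)) = 0) :
    ∀ j, ∑ u ∈ Finset.range (n / d j), (c j) ^ q ^ (d j * u) = 0 := by
  classical
  haveI : Finite F := Finite.of_injective _ (algebraMap F E).injective
  haveI : Fintype E := Fintype.ofFinite E
  haveI : Fintype F := Fintype.ofFinite F
  set p := ringChar F with hpdef
  haveI hp : Fact p.Prime := ⟨CharP.char_is_prime F p⟩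
  obtain ⟨e, hcard⟩ := FiniteField.card F p
  have hq : q = p ^ (e : ℕ) := by rw [← hcard.2, ← hF, Nat.card_eq_fintype_card]
  haveI : CharP E p := charP_of_injective_algebraMap' F p
  haveI : ExpChar E p := ExpChar.prime hp.out
  have hq2n : 1 < q ^ n := Nat.one_lt_pow hn.ne' hq1
  have hNpos : 0 < N := by omega
  haveI : NeZero N := ⟨hNpos.ne'⟩
  have hqNn : ((q : ZMod N)) ^ n = 1 := by
    have h1 : q ^ n = N + 1 := by omega
    calc ((q : ZMod N)) ^ n = ((q ^ n : ℕ) : ZMod N) := by push_cast; ring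
      _ = ((N + 1 : ℕ) : ZMod N) := by rw [h1]
      _ = 1 := by push_cast; simp
  have hper : ∀ j, (i j : ZMod N) * (q : ZMod N) ^ (d j) = (i j : ZMod N) :=
    fun j => (coset_period q n N (i j) (d j) hn hqNn (hd j)).2.1
  have hdpos : ∀ j, 0 < d j := fun j => (coset_period q n N (i j) (d j) hn hqNn (hd j)).1
  have hinj : ∀ j, ∀ a b : ℕ, a < d j → b < d j →
      (i j : ZMod N) * (q : ZMod N) ^ a = (i j : ZMod N) * (q : ZMod N) ^ b → a = b :=
    fun j => (coset_period q n N (i j) (d j) hn hqNn (hd j)).2.2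
  have hred : ∀ (j : Fin s) (m t : ℕ),
      (i j : ZMod N) * (q : ZMod N) ^ (d j * m + t) = (i j : ZMod N) * (q : ZMod N) ^ t := by
    intro j m
    induction m with
    | zero => intro t; simp
    | succ m ih =>
      intro t
      have h2 : d j * (m + 1) + t = d j + (d j * m + t) := by ring
      rw [h2, pow_add, ← mul_assoc, hper j, ih]
  have hαN : α ^ N = 1 := by rw [← hα]; exact pow_orderOf_eq_one α
  have hα0 : α ≠ 0 := by
    intro h0; rw [h0, zero_pow hNpos.ne'] at hαN; exact zero_ne_one hαN
  set a : Eˣ := Units.mk0 α hα0 with hadef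
  have hav : (a : E) = α := rfl
  have horda : orderOf a = N := by rw [← orderOf_units, hav, hα]
  have hcardU : Nat.card Eˣ = N := by
    rw [Nat.card_eq_fintype_card, Fintype.card_units, ← Nat.card_eq_fintype_card, hE, hN]
  have hgen : ∀ u : Eˣ, ∃ k : ℕ, a ^ k = u := by
    intro u
    have htop : Subgroup.zpowers a = ⊤ :=
      Subgroup.eq_top_of_card_eq _ (by rw [Nat.card_zpowers, horda, hcardU])
    have hu : u ∈ Submonoid.powers a := by
      rw [mem_powers_iff_mem_zpowers, htop]; trivial
    exact (Submonoid.mem_powers_iff u a).mp hu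
  have hcongU : ∀ x y : ℕ, a ^ x = a ^ y ↔ ((x : ZMod N) = (y : ZMod N)) := by
    intro x y
    rw [pow_eq_pow_iff_modEq, horda]
    exact (ZMod.natCast_eq_natCast_iff _ _ _).symm
  have hcong : ∀ x y : ℕ, ((x : ZMod N) = (y : ZMod N)) → α ^ x = α ^ y := by
    intro x y h
    have h2 := (hcongU x y).mpr h
    have h3 := congrArg (Units.val) h2
    rwa [Units.val_pow_eq_pow_val, Units.val_pow_eq_pow_val, hav] at h3
  have hrank : Module.finrank F E = n := by
    have h1 : Fintype.card E = Fintype.card F ^ Module.finrank F E := Module.card_eq_pow_finrank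
    rw [← Nat.card_eq_fintype_card, ← Nat.card_eq_fintype_card, hE, hF] at h1
    exact (Nat.pow_right_injective hq1 h1).symm
  set S : Fin s → E := fun j => ∑ u ∈ Finset.range (n / d j), (c j) ^ q ^ (d j * u) with hSdef
  let χ : ((j : Fin s) × Fin (d j)) → (Eˣ →* E) := fun jt =>
    (Units.coeHom E).comp (powMonoidHom (i jt.1 * q ^ (jt.2 : ℕ)))
  have hχapp : ∀ jt (u : Eˣ), χ jt u = (u : E) ^ (i jt.1 * q ^ (jt.2 : ℕ)) := by
    intro jt u
    simp [χ, powMonoidHom]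
  have hχinj : Function.Injective χ := by
    rintro ⟨j, t⟩ ⟨j', t'⟩ h
    have h1 : α ^ (i j * q ^ (t : ℕ)) = α ^ (i j' * q ^ (t' : ℕ)) := by
      have h2 := DFunLike.congr_fun h a
      rwa [hχapp, hχapp, hav] at h2
    have h2 : ((i j : ZMod N)) * (q : ZMod N) ^ (t : ℕ)
        = ((i j' : ZMod N)) * (q : ZMod N) ^ (t' : ℕ) := by
      have h1U : a ^ (i j * q ^ (t : ℕ)) = a ^ (i j' * q ^ (t' : ℕ)) := by
        apply Units.ext
        rwa [Units.val_pow_eq_pow_val, Units.val_pow_eq_pow_val, hav]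
      have h3 := (hcongU _ _).mp h1U
      push_cast at h3
      exact h3
    by_cases hjj : j = j'
    · subst hjj
      have ht : (t : ℕ) = (t' : ℕ) := hinj j _ _ t.isLt t'.isLt h2
      exact Sigma.ext rfl (heq_of_eq (Fin.ext ht))
    · exact absurd (cycCoset_eq_of_rel q n N hn hqNn h2) (hdist j j' hjj)
  have hsum : ∀ k : ℕ, ∑ jt : (j : Fin s) × Fin (d j),
      (S jt.1) ^ q ^ (jt.2 : ℕ) * χ jt (a ^ k) = 0 := by
    intro k
    have h0 : (0 : E) = ∑ j, ∑ t ∈ Finset.range n, (c j * α ^ (k * i j)) ^ q ^ t := by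
      calc (0 : E) = algebraMap F E (∑ j, Algebra.trace F E (c j * α ^ (k * i j))) := by
            rw [H k, map_zero]
        _ = ∑ j, algebraMap F E (Algebra.trace F E (c j * α ^ (k * i j))) := map_sum _ _ _
        _ = ∑ j, ∑ t ∈ Finset.range n, (c j * α ^ (k * i j)) ^ q ^ t := by
            refine Finset.sum_congr rfl fun j _ => ?_
            rw [trace_frobenius, hrank, hF]
    have hstep : ∀ j : Fin s, ∑ t ∈ Finset.range n, (c j * α ^ (k * i j)) ^ q ^ t
        = ∑ t ∈ Finset.range (d j), (S j) ^ q ^ t * α ^ (k * (i j * q ^ t)) := by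
      intro j
      have hnd : (n / d j) * d j = n := Nat.div_mul_cancel (hdn j)
      rw [← hnd, sum_range_mul_decomp, Finset.sum_comm]
      refine Finset.sum_congr rfl fun t _ => ?_
      have hXt : ∀ u' : ℕ, (α ^ (k * i j)) ^ q ^ (d j * u' + t) = α ^ (k * (i j * q ^ t)) := by
        intro u'
        rw [← pow_mul]
        apply hcong
        push_cast
        calc (k : ZMod N) * (i j : ZMod N) * (q : ZMod N) ^ (d j * u' + t)
            = (k : ZMod N) * ((i j : ZMod N) * (q : ZMod N) ^ (d j * u' + t)) := by ring
          _ = (k : ZMod N) * ((i j : ZMod N) * (q : ZMod N) ^ t) := by rw [hred j u' t]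
          _ = (k : ZMod N) * ((i j : ZMod N) * (q : ZMod N) ^ t) := rfl
      calc ∑ u' ∈ Finset.range (n / d j), (c j * α ^ (k * i j)) ^ q ^ (d j * u' + t)
          = ∑ u' ∈ Finset.range (n / d j),
              ((c j) ^ q ^ (d j * u')) ^ q ^ t * α ^ (k * (i j * q ^ t)) := by
            refine Finset.sum_congr rfl fun u' _ => ?_
            rw [mul_pow, hXt u']
            congr 1
            rw [← pow_mul, ← pow_add]
        _ = (∑ u' ∈ Finset.range (n / d j), ((c j) ^ q ^ (d j * u')) ^ q ^ t)
              * α ^ (k * (i j * q ^ t)) := by rw [Finset.sum_mul]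
        _ = (S j) ^ q ^ t * α ^ (k * (i j * q ^ t)) := by
            congr 1
            rw [hSdef]
            rw [show (q : ℕ) ^ t = p ^ ((e : ℕ) * t) by rw [hq, ← pow_mul]]
            exact (sum_pow_char_pow (p := p) (n := (e : ℕ) * t) _ _).symm
    have h2 : ∑ jt : (j : Fin s) × Fin (d j), (S jt.1) ^ q ^ (jt.2 : ℕ) * χ jt (a ^ k)
        = ∑ j, ∑ t ∈ Finset.range (d j), (S j) ^ q ^ t * α ^ (k * (i j * q ^ t)) := by
      rw [← Finset.univ_sigma_univ, Finset.sum_sigma]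
      refine Finset.sum_congr rfl fun j _ => ?_
      rw [← Fin.sum_univ_eq_sum_range (fun t => (S j) ^ q ^ t * α ^ (k * (i j * q ^ t))) (d j)]
      refine Finset.sum_congr rfl fun t _ => ?_
      congr 1
      rw [hχapp]
      rw [Units.val_pow_eq_pow_val, hav, ← pow_mul]
    calc ∑ jt : (j : Fin s) × Fin (d j), (S jt.1) ^ q ^ (jt.2 : ℕ) * χ jt (a ^ k)
        = ∑ j, ∑ t ∈ Finset.range (d j), (S j) ^ q ^ t * α ^ (k * (i j * q ^ t)) := h2
      _ = ∑ j, ∑ t ∈ Finset.range n, (c j * α ^ (k * i j)) ^ q ^ t :=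
          Finset.sum_congr rfl fun j _ => (hstep j).symm
      _ = 0 := h0.symm
  have hLI := (linearIndependent_monoidHom Eˣ E).comp χ hχinj
  have hcoef := Fintype.linearIndependent_iff.mp hLI
      (fun jt => (S jt.1) ^ q ^ (jt.2 : ℕ)) ?_
  · intro j
    have h3 := hcoef ⟨j, ⟨0, hdpos j⟩⟩
    simpa [hSdef] using h3
  · funext u
    obtain ⟨k, rfl⟩ := hgen u
    have h4 := hsum k
    simpa [Finset.sum_apply, smul_eq_mul] using h4

lemma pow_natCast_congr {E : Type*} [Field E] {α : E} {N : ℕ} (hα0 : α ≠ 0)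
    (hord : orderOf α = N) {x y : ℕ} (h : (x : ZMod N) = (y : ZMod N)) : α ^ x = α ^ y := by
  set a : Eˣ := Units.mk0 α hα0 with hadef
  have hav : (a : E) = α := rfl
  have horda : orderOf a = N := by rw [← orderOf_units, hav, hord]
  have h2 : a ^ x = a ^ y := by
    rw [pow_eq_pow_iff_modEq, horda]
    exact (ZMod.natCast_eq_natCast_iff _ _ _).mp h
  have h3 := congrArg (Units.val) h2
  rwa [Units.val_pow_eq_pow_val, Units.val_pow_eq_pow_val, hav] at h3


end QCAux

open QCAux

set_option synthInstance.maxHeartbeats 1000000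
set_option maxHeartbeats 1600000

/-- Remark after Theorem `enum-main`. If the `q`-cyclotomic coset of
`i_j` has size `n` for `j ≤ r` and size `δ_j < n` for `j > r`, then `C_V = C_W` iff
`V_j = W_j` for `j ≤ r` and `Tr_{F_{q^n}/F_{q^{δ_j}}}(V_j) = Tr_{F_{q^n}/F_{q^{δ_j}}}(W_j)`
for `j > r`. -/
theorem codeOf_eq_iff_mixed_cosets
    (p e q n N : ℕ) [Fact p.Prime] (he : 0 < e) (hq : q = p ^ e) (hn : 0 < n)
    (hN : N = q ^ n - 1)
    (F E : Type*) [Field F] [Field E] [Algebra F E]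
    (hF : Nat.card F = q) (hE : Nat.card E = q ^ n)
    (α : E) (hα : orderOf α = q ^ n - 1)
    (s : ℕ) (i : Fin s → ℕ) (hi : ∀ j, 1 ≤ i j)
    (hdist : ∀ j j' : Fin s, j ≠ j' → cycCoset q N (i j) ≠ cycCoset q N (i j'))
    (r : ℕ) (hr : r ≤ s) (δ : Fin s → ℕ)
    (hfull : ∀ j : Fin s, (j : ℕ) < r → (cycCoset q N (i j)).ncard = n)
    (hsmall : ∀ j : Fin s, r ≤ (j : ℕ) →
      (cycCoset q N (i j)).ncard = δ j ∧ δ j < n)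
    (hδn : ∀ j, δ j ∣ n)
    (K : Fin s → IntermediateField F E)
    (hK : ∀ j : Fin s, r ≤ (j : ℕ) → Nat.card (K j) = q ^ δ j)
    (V W : Fin s → Submodule F E) :
    codeOf F N α i (fun j => (V j : Set E)) = codeOf F N α i (fun j => (W j : Set E)) ↔
      ((∀ j : Fin s, (j : ℕ) < r → V j = W j) ∧
        ∀ j : Fin s, r ≤ (j : ℕ) →
          Algebra.trace (K j) E '' (V j : Set E) = Algebra.trace (K j) E '' (W j : Set E)) := by
  classical
  have hp : p.Prime := Fact.out
  have hq1 : 1 < q := by rw [hq]; exact Nat.one_lt_pow he.ne' hp.one_lt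
  have hq2n : 1 < q ^ n := Nat.one_lt_pow hn.ne' hq1
  have hNpos : 0 < N := by omega
  haveI : NeZero N := ⟨hNpos.ne'⟩
  haveI : Finite E := Nat.finite_of_card_ne_zero (by rw [hE]; omega)
  haveI : Finite F := Nat.finite_of_card_ne_zero (by rw [hF]; omega)
  have hα' : orderOf α = N := by rw [hN]; exact hα
  have hαN : α ^ N = 1 := by rw [← hα']; exact pow_orderOf_eq_one α
  have hα0 : α ≠ 0 := by
    intro h0; rw [h0, zero_pow hNpos.ne'] at hαN; exact zero_ne_one hαN
  have hcong : ∀ x y : ℕ, ((x : ZMod N) = (y : ZMod N)) → α ^ x = α ^ y :=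
    fun x y h => pow_natCast_congr hα0 hα' h
  have hqNn : ((q : ZMod N)) ^ n = 1 := by
    have h1 : q ^ n = N + 1 := by omega
    calc ((q : ZMod N)) ^ n = ((q ^ n : ℕ) : ZMod N) := by push_cast; ring
      _ = ((N + 1 : ℕ) : ZMod N) := by rw [h1]
      _ = 1 := by push_cast; simp
  -- the coset sizes
  set d : Fin s → ℕ := fun j => if (j : ℕ) < r then n else δ j with hddef
  have hd : ∀ j, (cycCoset q N (i j)).ncard = d j := by
    intro j
    by_cases hj : (j : ℕ) < r
    · rw [hddef]; simp only [hj, if_pos]; exact hfull j hj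
    · rw [hddef]; simp only [hj, if_neg, if_false]; exact (hsmall j (le_of_not_gt hj)).1
  have hdn : ∀ j, d j ∣ n := by
    intro j
    rw [hddef]
    by_cases hj : (j : ℕ) < r
    · simp [hj]
    · simp [hj]; exact hδn j
  have hδpos : ∀ j : Fin s, r ≤ (j : ℕ) → 0 < δ j := by
    intro j hj
    have h1 := (coset_period q n N (i j) (d j) hn hqNn (hd j)).1
    rw [hddef] at h1
    simpa [Nat.not_lt.mpr hj] using h1
  have hper : ∀ j : Fin s, r ≤ (j : ℕ) →
      (i j : ZMod N) * (q : ZMod N) ^ (δ j) = (i j : ZMod N) := by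
    intro j hj
    have h1 := (coset_period q n N (i j) (d j) hn hqNn (hd j)).2.1
    rw [hddef] at h1
    simpa [Nat.not_lt.mpr hj] using h1
  -- membership of α-powers in the subfields
  have hmem : ∀ (j : Fin s), r ≤ (j : ℕ) → ∀ k : ℕ, α ^ (k * i j) ∈ K j := by
    intro j hj k
    have hKcard : Nat.card (K j) = q ^ δ j := hK j hj
    have hKgt1 : 1 < Nat.card (K j) := by
      rw [hKcard]; exact Nat.one_lt_pow (hδpos j hj).ne' hq1
    apply mem_of_pow_card _ hKgt1
    rw [hKcard, ← pow_mul]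
    apply hcong
    push_cast
    calc (k : ZMod N) * (i j : ZMod N) * (q : ZMod N) ^ δ j
        = (k : ZMod N) * ((i j : ZMod N) * (q : ZMod N) ^ δ j) := by ring
      _ = (k : ZMod N) * (i j : ZMod N) := by rw [hper j hj]
  -- trace compatibility
  have htr : ∀ (j : Fin s), r ≤ (j : ℕ) → ∀ x w : E,
      Algebra.trace (K j) E x = Algebra.trace (K j) E w →
      ∀ k : ℕ, Algebra.trace F E (x * α ^ (k * i j)) =
        Algebra.trace F E (w * α ^ (k * i j)) := by
    intro j hj x w hxw k
    have hy : α ^ (k * i j) ∈ K j := hmem j hj k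
    have key : ∀ z : E, Algebra.trace F E (z * α ^ (k * i j)) =
        Algebra.trace F (K j) ((⟨α ^ (k * i j), hy⟩ : K j) * Algebra.trace (K j) E z) := by
      intro z
      have halg : algebraMap (K j) E ⟨α ^ (k * i j), hy⟩ = α ^ (k * i j) := rfl
      have h1 : z * α ^ (k * i j) = (⟨α ^ (k * i j), hy⟩ : K j) • z := by
        rw [Algebra.smul_def, halg, mul_comm]
      rw [h1, ← Algebra.trace_trace (S := K j), map_smul, smul_eq_mul]
    rw [key x, key w, hxw]
  constructor
  · -- forward direction
    intro hC
    have main : ∀ (V' W' : Fin s → Submodule F E),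
        codeOf F N α i (fun j => (V' j : Set E)) ⊆ codeOf F N α i (fun j => (W' j : Set E)) →
        ∀ j0 : Fin s, ∀ v ∈ V' j0, ∃ w ∈ W' j0,
          ((j0 : ℕ) < r → v = w) ∧
          (r ≤ (j0 : ℕ) → Algebra.trace (K j0) E v = Algebra.trace (K j0) E w) := by
      intro V' W' hsub j0 v hv
      set β : Fin s → E := fun j => if j = j0 then v else 0 with hβdef
      have hβ : ∀ j, β j ∈ V' j := by
        intro j
        by_cases h : j = j0
        · subst h; simpa [hβdef] using hv
        · simp [hβdef, h]
      have hmemC : traceWord F N α i β ∈ codeOf F N α i (fun j => (W' j : Set E)) :=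
        hsub ⟨β, fun j => hβ j, rfl⟩
      obtain ⟨β', hβ', hword⟩ := hmemC
      have HH : ∀ k : ℕ, ∑ j, Algebra.trace F E ((β j - β' j) * α ^ (k * i j)) = 0 := by
        intro k
        have hkN : ∀ j : Fin s, α ^ (k * i j) = α ^ ((k % N) * i j) := by
          intro j
          apply hcong
          push_cast
          rw [ZMod.natCast_mod]
        have hw := congrFun hword ⟨k % N, Nat.mod_lt _ hNpos⟩
        have hw2 : Algebra.trace F E (∑ j, β j * α ^ ((k % N) * i j))
            = Algebra.trace F E (∑ j, β' j * α ^ ((k % N) * i j)) := hw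
        calc ∑ j, Algebra.trace F E ((β j - β' j) * α ^ (k * i j))
            = Algebra.trace F E (∑ j, (β j - β' j) * α ^ (k * i j)) := (map_sum _ _ _).symm
          _ = Algebra.trace F E ((∑ j, β j * α ^ (k * i j)) - ∑ j, β' j * α ^ (k * i j)) := by
              rw [← Finset.sum_sub_distrib]
              congr 1
              exact Finset.sum_congr rfl fun j _ => by rw [sub_mul]
          _ = Algebra.trace F E (∑ j, β j * α ^ ((k % N) * i j))
              - Algebra.trace F E (∑ j, β' j * α ^ ((k % N) * i j)) := by
              rw [map_sub]
              congr 2 <;> exact Finset.sum_congr rfl fun j _ => by rw [hkN j]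
          _ = 0 := by rw [hw2, sub_self]
      have hker := keyKernel q n N hq1 hn hN F E hF hE α hα' i hdist d hd hdn
        (fun j => β j - β' j) HH
      refine ⟨β' j0, hβ' j0, ?_, ?_⟩
      · intro hj0
        have h1 := hker j0
        have hdj0 : d j0 = n := by rw [hddef]; simp [hj0]
        rw [hdj0, Nat.div_self hn, Finset.sum_range_one] at h1
        simp only [Nat.mul_zero, pow_zero, pow_one, hβdef, if_pos rfl] at h1
        have h2 : v = β' j0 := by
          have := sub_eq_zero.mp h1
          simpa [hβdef] using this
        exact h2
      · intro hj0
        have hdj0 : d j0 = δ j0 := by rw [hddef]; simp [Nat.not_lt.mpr hj0]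
        have hKcard : Nat.card (K j0) = q ^ δ j0 := hK j0 hj0
        have hfrk : Module.finrank (K j0) E = n / δ j0 := by
          haveI : Fintype E := Fintype.ofFinite E
          haveI : Fintype (K j0) := Fintype.ofFinite (K j0)
          have h1 : Fintype.card E = Fintype.card (K j0) ^ Module.finrank (K j0) E :=
            Module.card_eq_pow_finrank
          rw [← Nat.card_eq_fintype_card, ← Nat.card_eq_fintype_card, hE, hKcard,
            ← pow_mul] at h1
          have h2 : n = δ j0 * Module.finrank (K j0) E := Nat.pow_right_injective hq1 h1
          rw [h2, Nat.mul_div_cancel_left _ (hδpos j0 hj0)]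
        have h1 := hker j0
        rw [hdj0] at h1
        have h3 : algebraMap (K j0) E (Algebra.trace (K j0) E (β j0 - β' j0)) = 0 := by
          rw [trace_frobenius, hfrk, hKcard]
          rw [← h1]
          exact Finset.sum_congr rfl fun u _ => by rw [← pow_mul]
        have h4 : Algebra.trace (K j0) E (β j0 - β' j0) = 0 :=
          (algebraMap (K j0) E).injective (by rw [h3, map_zero])
        rw [map_sub, sub_eq_zero] at h4
        have h5 : β j0 = v := by simp [hβdef]
        rw [h5] at h4
        exact h4
    have hsub1 : codeOf F N α i (fun j => (V j : Set E)) ⊆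
        codeOf F N α i (fun j => (W j : Set E)) := le_of_eq hC
    have hsub2 : codeOf F N α i (fun j => (W j : Set E)) ⊆
        codeOf F N α i (fun j => (V j : Set E)) := le_of_eq hC.symm
    constructor
    · intro j hj
      apply le_antisymm
      · intro v hv
        obtain ⟨w, hw, hlt, _⟩ := main V W hsub1 j v hv
        rw [hlt hj]; exact hw
      · intro v hv
        obtain ⟨w, hw, hlt, _⟩ := main W V hsub2 j v hv
        rw [hlt hj]; exact hw
    · intro j hj
      apply Set.Subset.antisymm
      · rintro x ⟨v, hv, rfl⟩
        obtain ⟨w, hw, _, htreq⟩ := main V W hsub1 j v hv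
        exact ⟨w, hw, (htreq hj).symm⟩
      · rintro x ⟨v, hv, rfl⟩
        obtain ⟨w, hw, _, htreq⟩ := main W V hsub2 j v hv
        exact ⟨w, hw, (htreq hj).symm⟩
  · -- backward direction
    rintro ⟨h1, h2⟩
    have incl : ∀ (V' W' : Fin s → Submodule F E),
        (∀ j : Fin s, (j : ℕ) < r → V' j = W' j) →
        (∀ j : Fin s, r ≤ (j : ℕ) →
          Algebra.trace (K j) E '' (V' j : Set E) ⊆ Algebra.trace (K j) E '' (W' j : Set E)) →
        codeOf F N α i (fun j => (V' j : Set E)) ⊆ codeOf F N α i (fun j => (W' j : Set E)) := by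
      intro V' W' hVW hTr w hwmem
      obtain ⟨β, hβ, rfl⟩ := hwmem
      have hchoice : ∀ j : Fin s, ∃ b, b ∈ W' j ∧ ∀ k : ℕ,
          Algebra.trace F E (β j * α ^ (k * i j)) = Algebra.trace F E (b * α ^ (k * i j)) := by
        intro j
        by_cases hj : (j : ℕ) < r
        · exact ⟨β j, (hVW j hj) ▸ hβ j, fun _ => rfl⟩
        · have hj' : r ≤ (j : ℕ) := Nat.le_of_not_lt hj
          have himg : Algebra.trace (K j) E (β j) ∈
              Algebra.trace (K j) E '' (W' j : Set E) := hTr j hj' ⟨β j, hβ j, rfl⟩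
          obtain ⟨b, hbW, hbtr⟩ := himg
          exact ⟨b, hbW, fun k => htr j hj' (β j) b hbtr.symm k⟩
      choose b hbW hbeq using hchoice
      refine ⟨b, hbW, ?_⟩
      funext k
      show Algebra.trace F E (∑ j, β j * α ^ ((k : ℕ) * i j))
        = Algebra.trace F E (∑ j, b j * α ^ ((k : ℕ) * i j))
      rw [map_sum, map_sum]
      exact Finset.sum_congr rfl fun j _ => hbeq j (k : ℕ)
    apply Set.Subset.antisymm
    · exact incl V W h1 (fun j hj => le_of_eq (h2 j hj))
    · exact incl W V (fun j hj => (h1 j hj).symm) (fun j hj => le_of_eq (h2 j hj).symm)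
end
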